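/- arXiv:2204.10478 — 5 statements merged into one kernel-verified Lean document; each statement's English description precedes it below -/
import Mathlib

section
/- For every integer n ≥ 1, the regret of the second-price auction with random reserve distribution μ_n^* against the n-fold i.i.d. product of the isorevenue distribution with parameter r_n^* equals exactly (1 − r_n^*)^{n−1} − ∫_{r_n^*}^{1} (1 − r_n^*/v)^{n−1} dv; that is, Regret(μ_n^*, (F_{r_n^*})^{⊗n}) = (1 − r_n^*)^{n−1} − ∫_{r_n^*}^{1} (1 − r_n^*/v)^{n−1} dv. -/
open MeasureTheory Real Set ENNReal

noncomputable section

/-- Largest coordinate of `v`. -/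
def top1 {n : ℕ} (v : Fin n → ℝ) : ℝ := ⨆ i, v i

/-- Second-largest coordinate of `v` (junk value `0` when `n = 1`). -/
def top2 {n : ℕ} (v : Fin n → ℝ) : ℝ := ⨅ i, ⨆ j ∈ ({i}ᶜ : Set (Fin n)), v j

/-- Regret of the second-price auction with random reserve `μ` against value distribution `G`. -/
def spaRegret (n : ℕ) (μ : Measure ℝ) (G : Measure (Fin n → ℝ)) : ℝ :=
  ∫ v in Set.Icc (0 : Fin n → ℝ) 1,
    (top1 v - ∫ p in Set.Icc (0:ℝ) 1, (if p ≤ top1 v then max (top2 v) p else 0) ∂μ) ∂G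

def gfun (n : ℕ) (r : ℝ) : ℝ :=
  (1 - r) ^ (n - 1) + Real.log r + ∑ k ∈ Finset.Icc 1 (n-1), (1 - r) ^ k / (k : ℝ)

def Phi (n : ℕ) (rs : ℝ) (v : ℝ) : ℝ :=
  if v ≤ rs then 0
  else (v / (v - rs)) ^ (n - 1) * Real.log (v / rs)
       - ∑ k ∈ Finset.Icc 1 (n-1), (1 / (k:ℝ)) * (v / (v - rs)) ^ (n - 1 - k)

def PhiExt (n : ℕ) (rs : ℝ) (v : ℝ) : ℝ := if v ≤ 1 then Phi n rs v else 1

def isoCDF (r : ℝ) (v : ℝ) : ℝ := if v < r then 0 else if v < 1 then 1 - r / v else 1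

/-- Regret of a direct mechanism with payment rule `p` against value distribution `G`. -/
def mechRegret (n : ℕ) (p : (Fin n → ℝ) → Fin n → ℝ) (G : Measure (Fin n → ℝ)) : ℝ :=
  ∫ v in Set.Icc (0 : Fin n → ℝ) 1, (top1 v - ∑ i, p v i) ∂G

/-- Dominant-strategy incentive compatible mechanism for `n` buyers with values in `[0,1]`. -/
def DSIC (n : ℕ) (x p : (Fin n → ℝ) → Fin n → ℝ) : Prop :=
  Measurable x ∧ Measurable p ∧ (∃ C, ∀ v i, |p v i| ≤ C) ∧
  ∀ v ∈ Set.Icc (0 : Fin n → ℝ) 1, (∑ j, x v j) ≤ 1 ∧ ∀ i,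
    0 ≤ x v i ∧ 0 ≤ v i * x v i - p v i ∧
    ∀ w ∈ Set.Icc (0:ℝ) 1,
      v i * x (Function.update v i w) i - p (Function.update v i w) i ≤ v i * x v i - p v i

def Exchangeable (n : ℕ) (μ : Measure (Fin n → ℝ)) : Prop :=
  ∀ σ : Equiv.Perm (Fin n), Measure.map (fun v i => v (σ i)) μ = μ

def Affiliated (n : ℕ) (μ : Measure (Fin n → ℝ)) : Prop :=
  ∃ (lam : Measure ℝ) (f : (Fin n → ℝ) → ℝ≥0∞), Measurable f ∧
    μ = (Measure.pi fun _ : Fin n => lam).withDensity f ∧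
    ∀ᵐ q ∂((Measure.pi fun _ : Fin n => lam).prod (Measure.pi fun _ : Fin n => lam)),
      f q.1 * f q.2 ≤ f (q.1 ⊓ q.2) * f (q.1 ⊔ q.2)

def worstCase (n : ℕ) (p : (Fin n → ℝ) → Fin n → ℝ) (C : Set (Measure (Fin n → ℝ))) : ℝ :=
  sSup {w | ∃ G ∈ C, w = mechRegret n p G}

def minimaxRegret (n : ℕ) (C : Set (Measure (Fin n → ℝ))) : ℝ :=
  sInf {w | ∃ x p, DSIC n x p ∧ w = worstCase n p C}

def iidClass (n : ℕ) : Set (Measure (Fin n → ℝ)) :=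
  {G | ∃ F : Measure ℝ, IsProbabilityMeasure F ∧ F (Set.Icc 0 1) = 1 ∧
        G = Measure.pi fun _ => F}

def affClass (n : ℕ) : Set (Measure (Fin n → ℝ)) :=
  {G | IsProbabilityMeasure G ∧ G (Set.Icc 0 1) = 1 ∧ Exchangeable n G ∧ Affiliated n G}

def exchClass (n : ℕ) : Set (Measure (Fin n → ℝ)) :=
  {G | IsProbabilityMeasure G ∧ G (Set.Icc 0 1) = 1 ∧ Exchangeable n G}

def allClass (n : ℕ) : Set (Measure (Fin n → ℝ)) :=
  {G | IsProbabilityMeasure G ∧ G (Set.Icc 0 1) = 1}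



def Wfn (μ : Measure ℝ) (s : ℝ) : ℝ := (μ (Set.Iic s)).toReal

def densM (m : ℕ) (r : ℝ) (s : ℝ) : ℝ := ((m:ℝ)+1) * (r/s^2) * (1-r/s)^m

def measM (m : ℕ) (r : ℝ) : Measure ℝ :=
  (volume.restrict (Set.Ioc r 1)).withDensity (fun s => ENNReal.ofReal (densM m r s))
    + (ENNReal.ofReal (1 - (1-r)^(m+1))) • Measure.dirac 1
-- ==================== auxiliary lemmas for stmt1 ====================

section Stmt1Aux

set_option maxHeartbeats 1000000

variable {m : ℕ}

/- ---------- order statistics ---------- -/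

lemma top1_meas : Measurable (top1 (n := m+1)) :=
  Measurable.iSup (fun i => measurable_pi_apply i)

lemma top2_meas : Measurable (top2 (n := m+1)) :=
  Measurable.iInf (fun i => Measurable.iSup
    (fun j => Measurable.iSup_Prop _ (measurable_pi_apply j)))

lemma top1_le_iff {v : Fin (m+1) → ℝ} {a : ℝ} : top1 v ≤ a ↔ ∀ i, v i ≤ a :=
  ciSup_le_iff (Finite.bddAbove_range v)

lemma le_top1 (v : Fin (m+1) → ℝ) (i : Fin (m+1)) : v i ≤ top1 v :=
  le_ciSup (Finite.bddAbove_range v) i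

lemma csup_pos' {j i : Fin (m+1)} (h : j ≠ i) (x : ℝ) :
    (⨆ _ : j ∈ ({i}ᶜ : Set (Fin (m+1))), x) = x :=
  ciSup_pos (by simpa using h)

lemma csup_neg' {i : Fin (m+1)} (x : ℝ) :
    (⨆ _ : i ∈ ({i}ᶜ : Set (Fin (m+1))), x) = 0 := by
  simp

lemma M_def (v : Fin (m+1) → ℝ) (i j : Fin (m+1)) (h : j ≠ i) :
    v j ≤ ⨆ k ∈ ({i}ᶜ : Set (Fin (m+1))), v k := by
  conv_lhs => rw [← csup_pos' h (v j)]
  exact le_ciSup (f := fun k => ⨆ _ : k ∈ ({i}ᶜ : Set (Fin (m+1))), v k)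
    (Finite.bddAbove_range _) j

lemma M_le (v : Fin (m+1) → ℝ) (i : Fin (m+1)) {s : ℝ} (hs : 0 ≤ s)
    (h : ∀ j, j ≠ i → v j ≤ s) : (⨆ k ∈ ({i}ᶜ : Set (Fin (m+1))), v k) ≤ s := by
  apply ciSup_le
  intro j
  by_cases hj : j = i
  · subst hj; rw [csup_neg']; exact hs
  · rw [csup_pos' hj]; exact h j hj

lemma top2_le (v : Fin (m+1) → ℝ) (i : Fin (m+1)) {s : ℝ} (hs : 0 ≤ s)
    (h : ∀ j, j ≠ i → v j ≤ s) : top2 v ≤ s :=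
  le_trans (ciInf_le (Finite.bddBelow_range _) i) (M_le v i hs h)

lemma event_iff {s : ℝ} (hs : 0 ≤ s) (v : Fin (m+1) → ℝ) :
    (top2 v ≤ s ∧ s < top1 v) ↔ ∃ i, s < v i ∧ ∀ j, j ≠ i → v j ≤ s := by
  constructor
  · rintro ⟨h2, h1⟩
    obtain ⟨i, hi⟩ := exists_lt_of_lt_ciSup h1
    refine ⟨i, hi, ?_⟩
    by_contra hcon
    push_neg at hcon
    obtain ⟨j, hji, hj⟩ := hcon
    have hlt : s < top2 v := by
      obtain ⟨k, hk⟩ := exists_eq_ciInf_of_finite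
        (f := fun i' => ⨆ j' ∈ ({i'}ᶜ : Set (Fin (m+1))), v j')
      rw [top2, ← hk]
      rcases eq_or_ne k i with rfl | hki
      · exact lt_of_lt_of_le hj (M_def v k j hji)
      · exact lt_of_lt_of_le hi (M_def v k i (Ne.symm hki))
    linarith
  · rintro ⟨i, hi, hall⟩
    exact ⟨top2_le v i hs hall, lt_of_lt_of_le hi (le_top1 v i)⟩

lemma top1_nonneg {v : Fin (m+1) → ℝ} (hv : (0:Fin (m+1) → ℝ) ≤ v) : 0 ≤ top1 v :=
  le_trans (hv 0) (le_top1 v 0)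

lemma top1_le_one {v : Fin (m+1) → ℝ} (hv : v ≤ 1) : top1 v ≤ 1 :=
  top1_le_iff.2 (fun i => hv i)

lemma top2_nonneg (v : Fin (m+1) → ℝ) : 0 ≤ top2 v := by
  apply le_ciInf
  intro i
  have h : (0:ℝ) = ⨆ _ : i ∈ ({i}ᶜ : Set (Fin (m+1))), v i := (csup_neg' _).symm
  rw [h]
  exact le_ciSup (f := fun k => ⨆ _ : k ∈ ({i}ᶜ : Set (Fin (m+1))), v k)
    (Finite.bddAbove_range _) i

lemma top2_le_top1 {v : Fin (m+1) → ℝ} (hv : (0:Fin (m+1) → ℝ) ≤ v) : top2 v ≤ top1 v := by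
  refine le_trans (ciInf_le (Finite.bddBelow_range _) 0) ?_
  apply ciSup_le
  intro j
  by_cases hj : j = (0:Fin (m+1))
  · subst hj; rw [csup_neg']; exact top1_nonneg hv
  · rw [csup_pos' hj]; exact le_top1 v j

/- ---------- algebra ---------- -/

variable {r : ℝ}

lemma gsum_eq (hz : gfun (m+1) r = 0) :
    Real.log r + ∑ k ∈ Finset.Icc 1 m, (1-r)^k / (k:ℝ) = -(1-r)^m := by
  have h : gfun (m+1) r
      = (1-r)^m + (Real.log r + ∑ k ∈ Finset.Icc 1 m, (1-r)^k / (k:ℝ)) := by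
    simp [gfun]; ring
  rw [hz] at h
  linarith

lemma phi_one (hr0 : 0 < r) (hr1 : r < 1) (hz : gfun (m+1) r = 0) : Phi (m+1) r 1 = 1 := by
  have h1r : (0:ℝ) < 1 - r := by linarith
  have hne : ((1:ℝ) - r) ^ m ≠ 0 := pow_ne_zero _ h1r.ne'
  have key : (1-r)^m * Phi (m+1) r 1 = (1-r)^m * 1 := by
    rw [Phi, if_neg (by linarith)]
    simp only [Nat.add_sub_cancel]
    rw [mul_sub, Finset.mul_sum]
    have eA : (1-r:ℝ)^m * ((1/(1-r))^m * Real.log (1/r)) = - Real.log r := by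
      rw [one_div, one_div, inv_pow, Real.log_inv, ← mul_assoc,
        mul_inv_cancel₀ hne, one_mul]
    have eB : ∀ k ∈ Finset.Icc 1 m,
        (1-r:ℝ)^m * ((1/(k:ℝ)) * (1/(1-r))^(m-k)) = (1-r)^k / (k:ℝ) := by
      intro k hk
      obtain ⟨hk1, hkm⟩ := Finset.mem_Icc.mp hk
      have hkne : (k:ℝ) ≠ 0 := Nat.cast_ne_zero.mpr (by omega)
      have hmk : ((1:ℝ)-r)^(m-k) ≠ 0 := pow_ne_zero _ h1r.ne'
      have hsplit : (1-r:ℝ)^m = (1-r)^(m-k) * (1-r)^k := by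
        rw [← pow_add]; congr 1; omega
      rw [one_div, one_div, inv_pow, hsplit]
      field_simp
    rw [Finset.sum_congr rfl eB, eA]
    have := gsum_eq (m := m) (r := r) hz
    linarith
  exact mul_left_cancel₀ hne key

lemma sum_shift (x : ℝ) (m : ℕ) :
    ∑ k ∈ Finset.Icc 1 m, x^(k-1) = ∑ j ∈ Finset.range m, x^j := by
  induction m with
  | zero => simp
  | succ m ih =>
    rw [Finset.sum_Icc_succ_top (by omega : 1 ≤ m+1), ih, Finset.sum_range_succ]
    simp

/- ---------- calculus ---------- -/

lemma hasDerivAt_base (r : ℝ) {s : ℝ} (hs : s ≠ 0) :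
    HasDerivAt (fun t : ℝ => 1 - r/t) (r/s^2) s := by
  simp only [div_eq_mul_inv]
  refine (((hasDerivAt_inv hs).const_mul r).const_sub 1).congr_deriv ?_
  ring

lemma ftc_pow (hr0 : 0 < r) {x : ℝ} (hrx : r ≤ x) :
    ∫ s in r..x, (((m:ℝ)+1) * (r/s^2) * (1-r/s)^m) = (1 - r/x)^(m+1) := by
  have hpos : ∀ s ∈ Set.uIcc r x, s ≠ 0 := by
    rw [Set.uIcc_of_le hrx]
    intro s hs
    have := hs.1; nlinarith [hr0]
  have hderiv : ∀ s ∈ Set.uIcc r x,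
      HasDerivAt (fun t : ℝ => (1 - r/t)^(m+1)) (((m:ℝ)+1) * (r/s^2) * (1-r/s)^m) s := by
    intro s hs
    have h := (hasDerivAt_base r (hpos s hs)).fun_pow (m+1)
    refine h.congr_deriv ?_
    push_cast
    ring
  have hcont : ContinuousOn (fun s : ℝ => ((m:ℝ)+1) * (r/s^2) * (1-r/s)^m) (Set.uIcc r x) := by
    apply ContinuousOn.mul
    · exact continuousOn_const.mul
        (continuousOn_const.div (continuousOn_id.pow 2) (fun s hs => pow_ne_zero _ (hpos s hs)))
    · exact (continuousOn_const.sub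
        (continuousOn_const.div continuousOn_id (hpos))).pow m
  rw [intervalIntegral.integral_eq_sub_of_hasDerivAt hderiv hcont.intervalIntegrable]
  rw [div_self hr0.ne']
  simp

lemma ftc_main (hr0 : 0 < r) (hr1 : r < 1) (hz : gfun (m+1) r = 0) :
    ∫ s in r..1, ((((m:ℝ)+1) * (r/s) * (1-r/s)^m) + (1-r/s)^m) = (1-r)^m := by
  set Ψ : ℝ → ℝ := fun s =>
    s*(1-r/s)^(m+1) + r * Real.log s - r * ∑ k ∈ Finset.Icc 1 m, (1-r/s)^k / (k:ℝ) with hΨ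
  have hpos : ∀ s ∈ Set.uIcc r 1, 0 < s := by
    rw [Set.uIcc_of_le hr1.le]
    intro s hs
    linarith [hs.1]
  have hderiv : ∀ s ∈ Set.uIcc r 1,
      HasDerivAt Ψ ((((m:ℝ)+1) * (r/s) * (1-r/s)^m) + (1-r/s)^m) s := by
    intro s hs
    have hs0 : s ≠ 0 := (hpos s hs).ne'
    have h1 := hasDerivAt_base r hs0
    have hA : HasDerivAt (fun t : ℝ => t*(1-r/t)^(m+1))
        (1 * (1-r/s)^(m+1) + s * ((↑(m+1)) * (1-r/s)^m * (r/s^2))) s :=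
      (hasDerivAt_id s).mul (h1.pow (m+1))
    have hB : HasDerivAt (fun t : ℝ => r * Real.log t) (r * s⁻¹) s :=
      (Real.hasDerivAt_log hs0).const_mul r
    have hC : HasDerivAt (fun t : ℝ => r * ∑ k ∈ Finset.Icc 1 m, (1-r/t)^k / (k:ℝ))
        (r * ∑ k ∈ Finset.Icc 1 m, ((k:ℝ) * (1-r/s)^(k-1) * (r/s^2)) / (k:ℝ)) s := by
      apply HasDerivAt.const_mul
      exact HasDerivAt.fun_sum (fun k hk => (h1.fun_pow k).div_const (k:ℝ))
    have htot := (hA.add hB).sub hC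
    refine htot.congr_deriv ?_
    have hsum : ∑ k ∈ Finset.Icc 1 m, ((k:ℝ) * (1-r/s)^(k-1) * (r/s^2)) / (k:ℝ)
        = (∑ j ∈ Finset.range m, (1-r/s)^j) * (r/s^2) := by
      rw [← sum_shift, Finset.sum_mul]
      apply Finset.sum_congr rfl
      intro k hk
      obtain ⟨h1k, hkm⟩ := Finset.mem_Icc.mp hk
      have hkne : (k:ℝ) ≠ 0 := Nat.cast_ne_zero.mpr (by omega)
      field_simp
    rw [hsum]
    have hrs : r/s ≠ 0 := div_ne_zero hr0.ne' hs0
    rw [geom_sum_eq (by intro h; exact hrs (by linarith)) m]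
    rw [show ((1:ℝ)-r/s) - 1 = -(r/s) by ring, div_neg, div_div_eq_mul_div]
    field_simp
    push_cast
    linear_combination (s - r) * (s * s⁻¹ - r * s⁻¹) ^ m * mul_inv_cancel₀ hs0
  have hcont : ContinuousOn
      (fun s : ℝ => (((m:ℝ)+1) * (r/s) * (1-r/s)^m) + (1-r/s)^m) (Set.uIcc r 1) := by
    have hne : ∀ s ∈ Set.uIcc r 1, s ≠ 0 := fun s hs => (hpos s hs).ne'
    apply ContinuousOn.add
    · exact (continuousOn_const.mul
        (continuousOn_const.div continuousOn_id hne)).mul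
        ((continuousOn_const.sub
          (continuousOn_const.div continuousOn_id hne)).pow m)
    · exact (continuousOn_const.sub
        (continuousOn_const.div continuousOn_id hne)).pow m
  rw [intervalIntegral.integral_eq_sub_of_hasDerivAt hderiv hcont.intervalIntegrable]
  have hΨ1 : Ψ 1 = (1-r)^(m+1) - r * ∑ k ∈ Finset.Icc 1 m, (1-r)^k / (k:ℝ) := by
    simp only [hΨ, div_one, one_mul, Real.log_one, mul_zero, add_zero]
  have hΨr : Ψ r = r * Real.log r := by
    have h0 : (1:ℝ) - r/r = 0 := by rw [div_self hr0.ne']; ring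
    show r * (1 - r/r)^(m+1) + r * Real.log r
        - r * ∑ k ∈ Finset.Icc 1 m, (1-r/r)^k / (k:ℝ) = r * Real.log r
    rw [h0, zero_pow (Nat.succ_ne_zero m)]
    have hsum0 : ∑ k ∈ Finset.Icc 1 m, (0:ℝ)^k / (k:ℝ) = 0 := by
      apply Finset.sum_eq_zero
      intro k hk
      obtain ⟨h1k, _⟩ := Finset.mem_Icc.mp hk
      rw [zero_pow (by omega), zero_div]
    rw [hsum0]
    ring
  rw [hΨ1, hΨr]
  have hm2 : ∑ k ∈ Finset.Icc 1 m, (1-r)^k / (k:ℝ) = -(1-r)^m - Real.log r := by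
    have := gsum_eq (m := m) (r := r) hz
    linarith
  rw [hm2]
  ring

/- ---------- generic CDF facts ---------- -/

variable {μ : Measure ℝ} [IsProbabilityMeasure μ]

lemma meas_Iio_zero (h0 : μ (Set.Iic 0) = 0) : μ (Set.Iio 0) = 0 :=
  le_antisymm (le_trans (measure_mono Set.Iio_subset_Iic_self) h0.le) (by positivity)

lemma meas_Ioi_one (h1 : μ (Set.Iic 1) = 1) : μ (Set.Ioi 1) = 0 := by
  have h := measure_compl (measurableSet_Iic (a := (1:ℝ))) (measure_ne_top μ _)
  rw [Set.compl_Iic] at h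
  rw [h, h1, measure_univ, tsub_self]

lemma compl_Icc01 : (Set.Icc (0:ℝ) 1)ᶜ = Set.Iio 0 ∪ Set.Ioi 1 := by
  ext x
  simp only [Set.mem_compl_iff, Set.mem_Icc, not_and_or, not_le, Set.mem_union,
    Set.mem_Iio, Set.mem_Ioi]

lemma meas_compl_Icc01 (h0 : μ (Set.Iic 0) = 0) (h1 : μ (Set.Iic 1) = 1) :
    μ (Set.Icc (0:ℝ) 1)ᶜ = 0 := by
  rw [compl_Icc01]
  exact measure_union_null (meas_Iio_zero h0) (meas_Ioi_one h1)

lemma Wfn_mono : Monotone (Wfn μ) := fun a b hab =>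
  ENNReal.toReal_mono (measure_ne_top μ _) (measure_mono (Set.Iic_subset_Iic.2 hab))

lemma Wfn_meas : Measurable (Wfn μ) := Wfn_mono.measurable

lemma Wfn_nonneg (s : ℝ) : 0 ≤ Wfn μ s := ENNReal.toReal_nonneg

lemma Wfn_le_one (s : ℝ) : Wfn μ s ≤ 1 := by
  rw [Wfn, show (1:ℝ) = (μ Set.univ).toReal by simp]
  exact ENNReal.toReal_mono (measure_ne_top μ _) (measure_mono (Set.subset_univ _))

lemma meas_Ioc_toReal {a b : ℝ} (hab : a ≤ b) :
    (μ (Set.Ioc a b)).toReal = Wfn μ b - Wfn μ a := by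
  rw [← Set.Iic_sdiff_Iic,
    measure_diff (Set.Iic_subset_Iic.2 hab) measurableSet_Iic.nullMeasurableSet
      (measure_ne_top μ _),
    ENNReal.toReal_sub_of_le (measure_mono (Set.Iic_subset_Iic.2 hab)) (measure_ne_top μ _)]
  rfl

lemma Wfn_intervalIntegrable (a b : ℝ) : IntervalIntegrable (Wfn μ) volume a b := by
  rw [intervalIntegrable_iff]
  refine ⟨Wfn_meas.aestronglyMeasurable, ?_⟩
  apply HasFiniteIntegral.restrict_of_bounded (C := 1) measure_Ioc_lt_top
  apply ae_of_all
  intro x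
  rw [Real.norm_eq_abs, abs_of_nonneg (Wfn_nonneg x)]
  exact Wfn_le_one x

lemma Wfn_integrableOn {s : Set ℝ} (hvol : volume s < ∞) :
    IntegrableOn (Wfn μ) s volume := by
  refine ⟨Wfn_meas.aestronglyMeasurable, ?_⟩
  apply HasFiniteIntegral.restrict_of_bounded (C := 1) hvol
  apply ae_of_all
  intro x
  rw [Real.norm_eq_abs, abs_of_nonneg (Wfn_nonneg x)]
  exact Wfn_le_one x

lemma Pfn_diff {x y : ℝ} (hxy : x ≤ y) :
    (∫ t in (0:ℝ)..y, Wfn μ t) - (∫ t in (0:ℝ)..x, Wfn μ t)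
      = ∫ t in Set.Ioc x y, Wfn μ t := by
  have h1 := intervalIntegral.integral_add_adjacent_intervals
    (Wfn_intervalIntegrable (μ := μ) 0 x) (Wfn_intervalIntegrable (μ := μ) x y)
  rw [← intervalIntegral.integral_of_le hxy]
  linarith

/- ---------- the inner integral ---------- -/

lemma inner_integral_eq (h0 : μ (Set.Iic 0) = 0) (h1 : μ (Set.Iic 1) = 1)
    {a b : ℝ} (hb0 : 0 ≤ b) (hba : b ≤ a) (ha1 : a ≤ 1) :
    ∫ p in Set.Icc (0:ℝ) 1, (if p ≤ a then max b p else 0) ∂μ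
      = a * Wfn μ a - ∫ s in Set.Ioc b a, Wfn μ s := by
  have hrestr : μ.restrict (Set.Icc (0:ℝ) 1) = μ :=
    Measure.restrict_eq_self_of_ae_mem (mem_ae_iff.2 (meas_compl_Icc01 h0 h1))
  rw [hrestr]
  set f : ℝ → ℝ := fun p => if p ≤ a then max b p else 0 with hf
  have hfmeas : Measurable f :=
    Measurable.ite measurableSet_Iic (measurable_const.max measurable_id) measurable_const
  have hfbd : ∀ p, ‖f p‖ ≤ 1 := by
    intro p
    rw [Real.norm_eq_abs, abs_le]
    constructor
    · rw [hf]; dsimp only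
      split_ifs with h
      · exact le_trans (by linarith) (le_max_left _ _)
      · linarith
    · rw [hf]; dsimp only
      split_ifs with h
      · exact max_le (by linarith) (by linarith)
      · linarith
  have hfint : Integrable f μ :=
    ⟨hfmeas.aestronglyMeasurable, HasFiniteIntegral.of_bounded (C := 1) (ae_of_all _ hfbd)⟩
  have hfnn : 0 ≤ᵐ[μ] f :=
    ae_of_all _ (fun p => by
      rw [hf]; dsimp only
      split_ifs with h
      · exact le_trans hb0 (le_max_left _ _)
      · exact le_refl 0)
  rw [hfint.integral_eq_integral_meas_lt hfnn]
  simp only [measureReal_def]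
  set F : ℝ → ℝ := fun t => (μ {p | t < f p}).toReal with hF
  have hset1 : ∀ t : ℝ, 0 < t → t < b → {p : ℝ | t < f p} = Set.Iic a := by
    intro t ht htb; ext p
    simp only [hf, Set.mem_setOf_eq, Set.mem_Iic]
    split_ifs with h
    · exact ⟨fun _ => h, fun _ => lt_of_lt_of_le htb (le_max_left b p)⟩
    · exact ⟨fun h' => absurd h' (by linarith), fun hpa => absurd hpa h⟩
  have hset2 : ∀ t : ℝ, b ≤ t → {p : ℝ | t < f p} = Set.Ioc t a := by
    intro t htb; ext p
    simp only [hf, Set.mem_setOf_eq, Set.mem_Ioc]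
    split_ifs with h
    · rw [lt_max_iff]
      constructor
      · rintro (h' | h')
        · exact absurd h' (by linarith)
        · exact ⟨h', h⟩
      · rintro ⟨h', _⟩; exact Or.inr h'
    · constructor
      · intro h'; exact absurd h' (by linarith)
      · rintro ⟨_, hpa⟩; exact absurd hpa h
  have hFbd : ∀ t, ‖F t‖ ≤ 1 := by
    intro t
    rw [hF, Real.norm_eq_abs, abs_of_nonneg ENNReal.toReal_nonneg]
    rw [show (1:ℝ) = (μ Set.univ).toReal by simp]
    exact ENNReal.toReal_mono (measure_ne_top μ _) (measure_mono (Set.subset_univ _))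
  have hFmeas : Measurable F := by
    apply Measurable.ennreal_toReal
    apply Antitone.measurable
    intro s t hst
    exact measure_mono (fun p hp => lt_of_le_of_lt hst hp)
  set g : ℝ → ℝ := (Set.Ioc b a).indicator (fun t => Wfn μ a - Wfn μ t) with hg
  have hEq : Set.EqOn g F (Set.Ioi b) := by
    intro t ht
    have htb : b ≤ t := le_of_lt ht
    rw [hF]; dsimp only
    rw [hset2 t htb]
    by_cases hta : t ≤ a
    · rw [hg, Set.indicator_of_mem (Set.mem_Ioc.2 ⟨ht, hta⟩), meas_Ioc_toReal hta]
    · rw [hg, Set.indicator_of_notMem (fun hmem => hta (Set.mem_Ioc.1 hmem).2)]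
      rw [Set.Ioc_eq_empty (fun hlt => hta hlt.le), measure_empty]
      simp
  have hWint : IntegrableOn (fun t => Wfn μ a - Wfn μ t) (Set.Ioc b a) volume := by
    refine ⟨(measurable_const.sub Wfn_meas).aestronglyMeasurable, ?_⟩
    apply HasFiniteIntegral.restrict_of_bounded (C := 1) measure_Ioc_lt_top
    apply ae_of_all
    intro x
    rw [Real.norm_eq_abs, abs_le]
    constructor
    · have := Wfn_le_one (μ := μ) x
      have := Wfn_nonneg (μ := μ) a
      linarith
    · have := Wfn_nonneg (μ := μ) x
      have := Wfn_le_one (μ := μ) a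
      linarith
  have hgint : Integrable g volume :=
    (integrable_indicator_iff measurableSet_Ioc).2 hWint
  have hIoi : IntegrableOn F (Set.Ioi b) volume :=
    (hgint.integrableOn).congr_fun hEq measurableSet_Ioi
  have hIoc : IntegrableOn F (Set.Ioc 0 b) volume :=
    ⟨hFmeas.aestronglyMeasurable,
      HasFiniteIntegral.restrict_of_bounded (C := 1) measure_Ioc_lt_top (ae_of_all _ hFbd)⟩
  rw [show Set.Ioi (0:ℝ) = Set.Ioc 0 b ∪ Set.Ioi b from (Set.Ioc_union_Ioi_eq_Ioi hb0).symm,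
    setIntegral_union Set.Ioc_disjoint_Ioi_same measurableSet_Ioi hIoc hIoi]
  have hWint2 : IntegrableOn (Wfn μ) (Set.Ioc b a) volume :=
    Wfn_integrableOn measure_Ioc_lt_top
  have hI1 : ∫ t in Set.Ioc 0 b, F t = b * Wfn μ a := by
    have hb : ∀ᵐ t : ℝ ∂volume, t ≠ b := by
      have hsing : volume ({b} : Set ℝ) = 0 := Real.volume_singleton
      rw [ae_iff]
      convert hsing using 2
      ext t
      simp only [Set.mem_setOf_eq, Classical.not_not, Set.mem_singleton_iff]
    have hae : ∀ᵐ t ∂volume, t ∈ Set.Ioc (0:ℝ) b → F t = Wfn μ a := by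
      filter_upwards [hb] with t htb hmem
      rw [hF]; dsimp only
      rw [hset1 t hmem.1 (lt_of_le_of_ne hmem.2 htb)]
      rfl
    rw [setIntegral_congr_ae measurableSet_Ioc hae, setIntegral_const]
    rw [Real.volume_real_Ioc_of_le (by linarith), smul_eq_mul]
    ring
  have hI2 : ∫ t in Set.Ioi b, F t
      = (a - b) * Wfn μ a - ∫ s in Set.Ioc b a, Wfn μ s := by
    rw [setIntegral_congr_fun measurableSet_Ioi hEq.symm]
    rw [hg, setIntegral_indicator measurableSet_Ioc]
    rw [show Set.Ioi b ∩ Set.Ioc b a = Set.Ioc b a from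
      Set.inter_eq_self_of_subset_right (fun x hx => hx.1)]
    rw [integral_sub (integrableOn_const measure_Ioc_lt_top.ne (C := Wfn μ a)) hWint2]
    rw [setIntegral_const, Real.volume_real_Ioc_of_le (by linarith), smul_eq_mul]
  rw [hI1, hI2]
  ring

/- ---------- the law of top1 ---------- -/

lemma densM_nonneg (hr0 : 0 < r) {s : ℝ} (hrs : r ≤ s) : 0 ≤ densM m r s := by
  have hs0 : 0 < s := lt_of_lt_of_le hr0 hrs
  have h1 : r/s ≤ 1 := (div_le_one hs0).2 hrs
  have h2 : (0:ℝ) ≤ ((m:ℝ)+1) := by positivity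
  have h3 : (0:ℝ) ≤ 1 - r/s := by linarith
  unfold densM
  exact mul_nonneg (mul_nonneg h2 (div_nonneg hr0.le (by positivity))) (pow_nonneg h3 m)

lemma densM_intOn (hr0 : 0 < r) {s : Set ℝ} (hs : MeasurableSet s)
    (hsub : s ⊆ Set.Icc r 1) (hvol : volume s < ∞) : IntegrableOn (densM m r) s volume := by
  refine ⟨((measurable_const.mul
    (measurable_const.div (measurable_id.pow_const 2))).mul
    ((measurable_const.sub (measurable_const.div measurable_id)).pow_const m)).aestronglyMeasurable, ?_⟩
  apply HasFiniteIntegral.restrict_of_bounded (C := ((m:ℝ)+1)/r) hvol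
  rw [ae_restrict_iff' hs]
  apply ae_of_all
  intro x hx
  obtain ⟨hrx, hx1⟩ := hsub hx
  have hx0 : 0 < x := lt_of_lt_of_le hr0 hrx
  have h1 : r/x ≤ 1 := (div_le_one hx0).2 hrx
  have h2 : (0:ℝ) ≤ 1 - r/x := by linarith
  rw [Real.norm_eq_abs, abs_of_nonneg (densM_nonneg hr0 hrx)]
  unfold densM
  have hb1 : r/x^2 ≤ 1/r := by
    rw [div_le_div_iff₀ (by positivity) hr0]
    nlinarith
  have hrx0 : (0:ℝ) ≤ r/x := by positivity
  have hb2 : (1 - r/x)^m ≤ 1 := pow_le_one₀ h2 (by linarith)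
  calc ((m:ℝ)+1) * (r/x^2) * (1-r/x)^m ≤ ((m:ℝ)+1) * (1/r) * 1 := by
        apply mul_le_mul _ hb2 (pow_nonneg h2 m) (by positivity)
        apply mul_le_mul_of_nonneg_left hb1 (by positivity)
    _ = ((m:ℝ)+1)/r := by ring

variable {ν : Measure ℝ} [IsProbabilityMeasure ν]

lemma map_top1_eq (hr0 : 0 < r) (hr1 : r < 1)
    (hν : ∀ v : ℝ, ν (Set.Iic v) = ENNReal.ofReal (isoCDF r v)) :
    Measure.map top1 (Measure.pi fun _ : Fin (m+1) => ν) = measM m r := by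
  have hprobmap : IsProbabilityMeasure (Measure.map top1 (Measure.pi fun _ : Fin (m+1) => ν)) :=
    Measure.isProbabilityMeasure_map top1_meas.aemeasurable
  refine Measure.ext_of_Iic _ _ (fun x => ?_)
  rw [Measure.map_apply top1_meas measurableSet_Iic]
  have hpre : top1 ⁻¹' (Set.Iic x) = Set.pi Set.univ (fun _ : Fin (m+1) => Set.Iic x) := by
    ext v
    simp only [Set.mem_preimage, Set.mem_Iic, Set.mem_pi, Set.mem_univ, true_implies]
    exact top1_le_iff
  rw [hpre, Measure.pi_pi]
  simp only [hν x, Finset.prod_const, Finset.card_univ, Fintype.card_fin]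
  rw [measM, Measure.add_apply, Measure.smul_apply, smul_eq_mul,
    withDensity_apply _ measurableSet_Iic, Measure.restrict_restrict measurableSet_Iic]
  rcases lt_or_ge x r with hxr | hxr
  · have hempty : Set.Iic x ∩ Set.Ioc r 1 = ∅ := by
      ext s
      simp only [Set.mem_inter_iff, Set.mem_Iic, Set.mem_Ioc, Set.mem_empty_iff_false,
        iff_false, not_and, and_imp]
      intro hsx hrs
      linarith
    rw [hempty]
    rw [Measure.restrict_empty, lintegral_zero_measure,
      Measure.dirac_apply' _ measurableSet_Iic,
      Set.indicator_of_notMem (by simp only [Set.mem_Iic, not_le]; linarith)]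
    rw [isoCDF, if_pos hxr]
    simp
  · have hnn : (0:ℝ) ≤ 1 - r/x := by
      have hx0 : 0 < x := lt_of_lt_of_le hr0 hxr
      have : r/x ≤ 1 := (div_le_one hx0).2 hxr
      linarith
    rcases lt_or_ge x 1 with hx1 | hx1
    · have hinter : Set.Iic x ∩ Set.Ioc r 1 = Set.Ioc r x := by
        ext s
        simp only [Set.mem_inter_iff, Set.mem_Iic, Set.mem_Ioc]
        constructor
        · rintro ⟨h1, h2, _⟩; exact ⟨h2, h1⟩
        · rintro ⟨h1, h2⟩; exact ⟨h2, h1, by linarith⟩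
      rw [hinter]
      have hsub : Set.Ioc r x ⊆ Set.Icc r 1 := fun y hy => ⟨hy.1.le, hy.2.trans hx1.le⟩
      rw [← ofReal_integral_eq_lintegral_ofReal
        (densM_intOn hr0 measurableSet_Ioc hsub measure_Ioc_lt_top)
        ((ae_restrict_iff' measurableSet_Ioc).2
          (ae_of_all _ (fun y hy => densM_nonneg hr0 hy.1.le)))]
      rw [← intervalIntegral.integral_of_le hxr]
      rw [show ∫ s in r..x, densM m r s = (1 - r/x)^(m+1) from ftc_pow hr0 hxr]
      rw [Measure.dirac_apply' _ measurableSet_Iic,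
        Set.indicator_of_notMem (by simp only [Set.mem_Iic, not_le]; exact hx1)]
      rw [isoCDF, if_neg (not_lt.2 hxr), if_pos hx1]
      rw [← ENNReal.ofReal_pow hnn]
      simp
    · have hinter : Set.Iic x ∩ Set.Ioc r 1 = Set.Ioc r 1 := by
        rw [Set.inter_eq_self_of_subset_right]
        exact fun s hs => le_trans hs.2 hx1
      rw [hinter]
      have hsub : Set.Ioc r 1 ⊆ Set.Icc r 1 := fun y hy => ⟨hy.1.le, hy.2⟩
      rw [← ofReal_integral_eq_lintegral_ofReal
        (densM_intOn hr0 measurableSet_Ioc hsub measure_Ioc_lt_top)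
        ((ae_restrict_iff' measurableSet_Ioc).2
          (ae_of_all _ (fun y hy => densM_nonneg hr0 hy.1.le)))]
      rw [← intervalIntegral.integral_of_le hr1.le]
      rw [show ∫ s in r..1, densM m r s = (1 - r/1)^(m+1) from ftc_pow hr0 hr1.le]
      rw [Measure.dirac_apply' _ measurableSet_Iic,
        Set.indicator_of_mem (show (1:ℝ) ∈ Set.Iic x from hx1) (1 : ℝ → ℝ≥0∞), Pi.one_apply]
      have ha1 : (0:ℝ) ≤ (1-r)^(m+1) := pow_nonneg (by linarith) (m+1)
      have ha2 : (0:ℝ) ≤ 1 - (1-r)^(m+1) := by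
        have := pow_le_one₀ (a := (1:ℝ) - r) (n := m+1) (by linarith) (by linarith)
        linarith
      rw [div_one, mul_one, ← ENNReal.ofReal_add ha1 ha2]
      rw [isoCDF, if_neg (by push_neg; linarith), if_neg (not_lt.2 hx1)]
      rw [show (1-r)^(m+1) + (1 - (1-r)^(m+1)) = 1 by ring]
      simp

lemma integral_measM (hr0 : 0 < r) (hr1 : r < 1)
    (hν : ∀ v : ℝ, ν (Set.Iic v) = ENNReal.ofReal (isoCDF r v))
    {h : ℝ → ℝ} (hmeas : Measurable h) {C : ℝ}
    (hbd : ∀ x ∈ Set.Icc r 1, ‖h x‖ ≤ C) :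
    ∫ v, h (top1 v) ∂(Measure.pi fun _ : Fin (m+1) => ν)
      = (∫ s in Set.Ioc r 1, densM m r s * h s) + (1 - (1-r)^(m+1)) * h 1 := by
  rw [← integral_map top1_meas.aemeasurable hmeas.aestronglyMeasurable,
    map_top1_eq hr0 hr1 hν]
  set wd := (volume.restrict (Set.Ioc r 1)).withDensity
    (fun s => ENNReal.ofReal (densM m r s)) with hwd
  set dm := (ENNReal.ofReal (1 - (1-r)^(m+1))) • Measure.dirac (1:ℝ) with hdm
  have hMeq : measM m r = wd + dm := rfl
  have hMfin : IsProbabilityMeasure (measM m r) := by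
    rw [← map_top1_eq hr0 hr1 hν]
    exact Measure.isProbabilityMeasure_map top1_meas.aemeasurable
  have hwdle : wd Set.univ ≤ measM m r Set.univ := by
    rw [hMeq, Measure.add_apply]
    exact le_self_add
  have hdmle : dm Set.univ ≤ measM m r Set.univ := by
    rw [hMeq, Measure.add_apply]
    exact le_add_self
  haveI hwdfin : IsFiniteMeasure wd :=
    ⟨lt_of_le_of_lt hwdle (by rw [measure_univ]; exact ENNReal.one_lt_top)⟩
  haveI hdmfin : IsFiniteMeasure dm :=
    ⟨lt_of_le_of_lt hdmle (by rw [measure_univ]; exact ENNReal.one_lt_top)⟩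
  have haewd : ∀ᵐ x ∂wd, x ∈ Set.Ioc r 1 :=
    Filter.Eventually.filter_mono
      ((withDensity_absolutelyContinuous (volume.restrict (Set.Ioc r 1)) _).ae_le)
      (ae_restrict_mem measurableSet_Ioc)
  have haedm : ∀ᵐ x ∂dm, x = 1 := by
    rw [ae_iff]
    have : {x : ℝ | ¬ x = 1} = ({1} : Set ℝ)ᶜ := by ext y; simp
    rw [this, hdm, Measure.smul_apply, Measure.dirac_apply' _ (measurableSet_singleton 1).compl,
      Set.indicator_of_notMem (by simp), smul_eq_mul, mul_zero]
  have hintwd : Integrable h wd := by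
    refine ⟨hmeas.aestronglyMeasurable, HasFiniteIntegral.of_bounded (C := C) ?_⟩
    filter_upwards [haewd] with x hx
    exact hbd x ⟨hx.1.le, hx.2⟩
  have hintdm : Integrable h dm := by
    refine ⟨hmeas.aestronglyMeasurable, HasFiniteIntegral.of_bounded (C := C) ?_⟩
    filter_upwards [haedm] with x hx
    rw [hx]
    exact hbd 1 ⟨hr1.le, le_refl 1⟩
  rw [hMeq, integral_add_measure hintwd hintdm]
  have e1 : ∫ x, h x ∂wd = ∫ s in Set.Ioc r 1, densM m r s * h s := by
    have hwd' : wd = (volume.restrict (Set.Ioc r 1)).withDensity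
        (fun s => ((densM m r s).toNNReal : ℝ≥0∞)) := rfl
    have hdmeas : Measurable (fun s => Real.toNNReal (densM m r s)) := by
      apply Measurable.real_toNNReal
      exact (measurable_const.mul
        (measurable_const.div (measurable_id.pow_const 2))).mul
        ((measurable_const.sub (measurable_const.div measurable_id)).pow_const m)
    rw [hwd', integral_withDensity_eq_integral_smul hdmeas h]
    apply setIntegral_congr_fun measurableSet_Ioc
    intro s hs
    show (densM m r s).toNNReal • h s = densM m r s * h s
    rw [NNReal.smul_def, Real.coe_toNNReal _ (densM_nonneg hr0 hs.1.le), smul_eq_mul]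
  have hnn1 : (0:ℝ) ≤ 1 - (1-r)^(m+1) := by
    have := pow_le_one₀ (a := (1:ℝ) - r) (n := m+1) (by linarith) (by linarith)
    linarith
  have e2 : ∫ x, h x ∂dm = (1 - (1-r)^(m+1)) * h 1 := by
    rw [hdm, integral_smul_measure, integral_dirac' h 1 hmeas.stronglyMeasurable,
      ENNReal.toReal_ofReal hnn1]
    rfl
  rw [e1, e2]

/- ---------- the event {top2 ≤ s < top1} ---------- -/

lemma meas_event {s : ℝ} (hs0 : 0 ≤ s) :
    (Measure.pi fun _ : Fin (m+1) => ν) {v | top2 v ≤ s ∧ s < top1 v}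
      = (m+1 : ℕ) * (ν (Set.Ioi s) * ν (Set.Iic s)^m) := by
  have hset : {v : Fin (m+1) → ℝ | top2 v ≤ s ∧ s < top1 v}
      = ⋃ i, Set.pi Set.univ (fun j => if j = i then Set.Ioi s else Set.Iic s) := by
    ext v
    rw [Set.mem_setOf_eq, event_iff hs0, Set.mem_iUnion]
    constructor
    · rintro ⟨i, hi, hall⟩
      refine ⟨i, fun j _ => ?_⟩
      dsimp only
      by_cases hj : j = i
      · rw [if_pos hj, hj]; exact hi
      · rw [if_neg hj]; exact hall j hj
    · rintro ⟨i, hi⟩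
      refine ⟨i, ?_, ?_⟩
      · have h := hi i (Set.mem_univ i); dsimp only at h; rw [if_pos rfl] at h; exact h
      · intro j hj
        have h := hi j (Set.mem_univ j); dsimp only at h; rw [if_neg hj] at h; exact h
  rw [hset, measure_iUnion ?hdisj ?hmeas]
  case hdisj =>
    intro i j hij
    rw [Function.onFun]
    apply Set.disjoint_left.2
    intro v hvi hvj
    have h1 := hvi i (Set.mem_univ i); dsimp only at h1; rw [if_pos rfl] at h1
    have h2 := hvj i (Set.mem_univ i); dsimp only at h2; rw [if_neg hij] at h2
    exact absurd (Set.mem_Ioi.1 h1) (not_lt.2 (Set.mem_Iic.1 h2))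
  case hmeas =>
    intro i
    apply MeasurableSet.univ_pi
    intro j
    by_cases hj : j = i
    · rw [if_pos hj]; exact measurableSet_Ioi
    · rw [if_neg hj]; exact measurableSet_Iic
  rw [tsum_fintype]
  have heach : ∀ i : Fin (m+1),
      (Measure.pi fun _ : Fin (m+1) => ν)
        (Set.pi Set.univ (fun j => if j = i then Set.Ioi s else Set.Iic s))
        = ν (Set.Ioi s) * ν (Set.Iic s)^m := by
    intro i
    rw [Measure.pi_pi]
    rw [← Finset.mul_prod_erase Finset.univ _ (Finset.mem_univ i)]
    rw [if_pos rfl]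
    congr 1
    rw [Finset.prod_congr rfl (fun j hj => by rw [if_neg (Finset.mem_erase.1 hj).1])]
    rw [Finset.prod_const, Finset.card_erase_of_mem (Finset.mem_univ i),
      Finset.card_univ, Fintype.card_fin, Nat.add_sub_cancel]
  rw [Finset.sum_congr rfl (fun i _ => heach i), Finset.sum_const, Finset.card_univ,
    Fintype.card_fin, nsmul_eq_mul]

/- ---------- the Fubini part ---------- -/

lemma I3_eq (hr0 : 0 < r) (hr1 : r < 1)
    (hW0 : ∀ s : ℝ, s ≤ r → Wfn μ s = 0)
    (hν : ∀ v : ℝ, ν (Set.Iic v) = ENNReal.ofReal (isoCDF r v))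
    (haebox : ∀ᵐ v ∂(Measure.pi fun _ : Fin (m+1) => ν),
      v ∈ Set.Icc (0 : Fin (m+1) → ℝ) 1) :
    ∫ v, ((∫ t in (0:ℝ)..(top1 v), Wfn μ t) - ∫ t in (0:ℝ)..(top2 v), Wfn μ t)
        ∂(Measure.pi fun _ : Fin (m+1) => ν)
      = ∫ s in Set.Ioc r 1, Wfn μ s * (((m:ℝ)+1) * (r/s) * (1-r/s)^m) := by
  set G := Measure.pi fun _ : Fin (m+1) => ν with hG
  have hqmeas : Measurable (fun s : ℝ => ((m:ℝ)+1) * (r/s) * (1-r/s)^m) :=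
    (measurable_const.mul (measurable_const.div measurable_id)).mul
      ((measurable_const.sub (measurable_const.div measurable_id)).pow_const m)
  have hPcont : Continuous (fun x : ℝ => ∫ t in (0:ℝ)..x, Wfn μ t) :=
    intervalIntegral.continuous_primitive (fun a b => Wfn_intervalIntegrable a b) 0
  have hnn : 0 ≤ᵐ[G] fun v =>
      (∫ t in (0:ℝ)..(top1 v), Wfn μ t) - ∫ t in (0:ℝ)..(top2 v), Wfn μ t := by
    filter_upwards [haebox] with v hv
    have h21 : top2 v ≤ top1 v := top2_le_top1 hv.1
    have hd := Pfn_diff (μ := μ) h21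
    have hpos : 0 ≤ ∫ t in Set.Ioc (top2 v) (top1 v), Wfn μ t :=
      setIntegral_nonneg measurableSet_Ioc (fun t _ => Wfn_nonneg t)
    show (0:ℝ) ≤ _
    linarith [hd, hpos]
  have hasm : AEStronglyMeasurable (fun v =>
      (∫ t in (0:ℝ)..(top1 v), Wfn μ t) - ∫ t in (0:ℝ)..(top2 v), Wfn μ t) G :=
    ((hPcont.measurable.comp top1_meas).sub (hPcont.measurable.comp top2_meas)).aestronglyMeasurable
  rw [integral_eq_lintegral_of_nonneg_ae hnn hasm]
  have hEmeas : MeasurableSet {p : (Fin (m+1) → ℝ) × ℝ | top2 p.1 ≤ p.2 ∧ p.2 < top1 p.1} := by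
    have : {p : (Fin (m+1) → ℝ) × ℝ | top2 p.1 ≤ p.2 ∧ p.2 < top1 p.1}
        = {p : (Fin (m+1) → ℝ) × ℝ | top2 p.1 ≤ p.2} ∩ {p | p.2 < top1 p.1} := rfl
    rw [this]
    exact (measurableSet_le (top2_meas.comp measurable_fst) measurable_snd).inter
      (measurableSet_lt measurable_snd (top1_meas.comp measurable_fst))
  set Ψ : (Fin (m+1) → ℝ) × ℝ → ℝ≥0∞ := fun p =>
    Set.indicator {p' : (Fin (m+1) → ℝ) × ℝ | top2 p'.1 ≤ p'.2 ∧ p'.2 < top1 p'.1}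
      (fun p' => ENNReal.ofReal (Wfn μ p'.2)) p with hΨ
  have hΨmeas : Measurable Ψ :=
    (ENNReal.measurable_ofReal.comp (Wfn_meas.comp measurable_snd)).indicator hEmeas
  have hstep1 : ∫⁻ v, ENNReal.ofReal
        ((∫ t in (0:ℝ)..(top1 v), Wfn μ t) - ∫ t in (0:ℝ)..(top2 v), Wfn μ t) ∂G
      = ∫⁻ v, ∫⁻ s, Ψ (v, s) ∂volume ∂G := by
    apply lintegral_congr_ae
    filter_upwards [haebox] with v hv
    have h21 : top2 v ≤ top1 v := top2_le_top1 hv.1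
    rw [Pfn_diff h21]
    rw [integral_Ioc_eq_integral_Ioo, ← integral_Ico_eq_integral_Ioo]
    rw [ofReal_integral_eq_lintegral_ofReal (Wfn_integrableOn measure_Ico_lt_top)
      ((ae_restrict_iff' measurableSet_Ico).2 (ae_of_all _ (fun t _ => Wfn_nonneg t)))]
    rw [← lintegral_indicator measurableSet_Ico]
    apply lintegral_congr
    intro s
    rw [hΨ]; dsimp only
    rw [Set.indicator_apply, Set.indicator_apply]
    simp only [Set.mem_Ico, Set.mem_setOf_eq]
  rw [hstep1]
  rw [lintegral_lintegral_swap hΨmeas.aemeasurable]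
  have hsetmeas : ∀ s : ℝ, MeasurableSet {v : Fin (m+1) → ℝ | top2 v ≤ s ∧ s < top1 v} := by
    intro s
    have : {v : Fin (m+1) → ℝ | top2 v ≤ s ∧ s < top1 v}
        = {v : Fin (m+1) → ℝ | top2 v ≤ s} ∩ {v | s < top1 v} := rfl
    rw [this]
    exact (measurableSet_le top2_meas measurable_const).inter
      (measurableSet_lt measurable_const top1_meas)
  have hstep3 : ∀ s : ℝ, ∫⁻ v, Ψ (v, s) ∂G
      = ENNReal.ofReal (Wfn μ s) * G {v | top2 v ≤ s ∧ s < top1 v} := by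
    intro s
    have hpt : ∀ v, Ψ (v, s) = Set.indicator {v : Fin (m+1) → ℝ | top2 v ≤ s ∧ s < top1 v}
        (fun _ => ENNReal.ofReal (Wfn μ s)) v := by
      intro v
      rw [hΨ]; dsimp only
      rw [Set.indicator_apply, Set.indicator_apply]
      simp only [Set.mem_setOf_eq]
    rw [lintegral_congr hpt, lintegral_indicator_const (hsetmeas s)]
  rw [lintegral_congr hstep3]
  have hqnn : ∀ x ∈ Set.Ioc r 1, 0 ≤ Wfn μ x * (((m:ℝ)+1) * (r/x) * (1-r/x)^m) := by
    intro x hx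
    have hx0 : 0 < x := lt_trans hr0 hx.1
    have h1 : r/x ≤ 1 := (div_le_one hx0).2 hx.1.le
    have h2 : (0:ℝ) ≤ r/x := by positivity
    exact mul_nonneg (Wfn_nonneg x)
      (mul_nonneg (mul_nonneg (by positivity) h2) (pow_nonneg (by linarith) m))
  have hstep4 : ∀ᵐ s : ℝ ∂volume,
      ENNReal.ofReal (Wfn μ s) * G {v | top2 v ≤ s ∧ s < top1 v}
        = ENNReal.ofReal ((Set.Ioc r 1).indicator
            (fun s => Wfn μ s * (((m:ℝ)+1) * (r/s) * (1-r/s)^m)) s) := by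
    have hne1 : ∀ᵐ s : ℝ ∂volume, s ≠ 1 := by
      have hsing : volume ({(1:ℝ)} : Set ℝ) = 0 := Real.volume_singleton
      rw [ae_iff]
      convert hsing using 2
      ext t
      simp only [Set.mem_setOf_eq, Classical.not_not, Set.mem_singleton_iff]
    filter_upwards [hne1] with s hs1
    rcases le_or_gt s r with hsr | hsr
    · rw [hW0 s hsr, ENNReal.ofReal_zero, zero_mul,
        Set.indicator_of_notMem (fun hmem => absurd hmem.1 (not_lt.2 hsr)),
        ENNReal.ofReal_zero]
    · have hs0 : (0:ℝ) ≤ s := le_trans hr0.le hsr.le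
      rw [hG, meas_event hs0]
      rcases lt_or_ge s 1 with hslt | hsge
      · have hsp : 0 < s := lt_trans hr0 hsr
        have h3 : (0:ℝ) ≤ 1 - r/s := by
          have : r/s ≤ 1 := (div_le_one hsp).2 hsr.le
          linarith
        have hIic : ν (Set.Iic s) = ENNReal.ofReal (1 - r/s) := by
          rw [hν s, isoCDF, if_neg (not_lt.2 hsr.le), if_pos hslt]
        have hIoi : ν (Set.Ioi s) = ENNReal.ofReal (r/s) := by
          rw [← Set.compl_Iic, measure_compl measurableSet_Iic (measure_ne_top ν _),
            measure_univ, hIic, ← ENNReal.ofReal_one,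
            ← ENNReal.ofReal_sub _ h3]
          congr 1
          ring
        rw [hIic, hIoi,
          Set.indicator_of_mem (Set.mem_Ioc.2 ⟨hsr, hslt.le⟩)]
        have h2 : (0:ℝ) ≤ r/s := by positivity
        rw [ENNReal.ofReal_mul (Wfn_nonneg s),
          ENNReal.ofReal_mul (by positivity : (0:ℝ) ≤ ((m:ℝ)+1) * (r/s)),
          ENNReal.ofReal_mul (by positivity : (0:ℝ) ≤ (m:ℝ)+1),
          ENNReal.ofReal_pow h3]
        rw [show ENNReal.ofReal ((m:ℝ)+1) = ((m+1 : ℕ) : ℝ≥0∞) by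
          rw [← ENNReal.ofReal_natCast (m+1)]; congr 1; push_cast; ring]
        ring
      · have hsgt : 1 < s := lt_of_le_of_ne hsge (Ne.symm hs1)
        have hIic : ν (Set.Iic s) = 1 := by
          rw [hν s, isoCDF, if_neg (by push_neg; linarith), if_neg (not_lt.2 hsge),
            ENNReal.ofReal_one]
        have hIoi : ν (Set.Ioi s) = 0 := by
          rw [← Set.compl_Iic, measure_compl measurableSet_Iic (measure_ne_top ν _),
            measure_univ, hIic, tsub_self]
        rw [hIic, hIoi,
          Set.indicator_of_notMem (fun hmem => absurd hmem.2 (not_le.2 hsgt))]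
        simp
  rw [lintegral_congr_ae hstep4]
  have hTint : Integrable ((Set.Ioc r 1).indicator
      (fun s => Wfn μ s * (((m:ℝ)+1) * (r/s) * (1-r/s)^m))) volume := by
    apply (integrable_indicator_iff measurableSet_Ioc).2
    refine ⟨(Wfn_meas.mul hqmeas).aestronglyMeasurable, ?_⟩
    apply HasFiniteIntegral.restrict_of_bounded (C := (m:ℝ)+1) measure_Ioc_lt_top
    rw [ae_restrict_iff' measurableSet_Ioc]
    apply ae_of_all
    intro x hx
    have hx0 : 0 < x := lt_trans hr0 hx.1
    have h1 : r/x ≤ 1 := (div_le_one hx0).2 hx.1.le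
    have h2 : (0:ℝ) ≤ r/x := by positivity
    have h3 : (0:ℝ) ≤ 1 - r/x := by linarith
    rw [Real.norm_eq_abs, abs_of_nonneg (hqnn x hx)]
    calc Wfn μ x * (((m:ℝ)+1) * (r/x) * (1-r/x)^m)
        ≤ 1 * (((m:ℝ)+1) * 1 * 1) := by
          apply mul_le_mul (Wfn_le_one x) _ _ zero_le_one
          · apply mul_le_mul _ (pow_le_one₀ h3 (by linarith)) (pow_nonneg h3 m) (by positivity)
            apply mul_le_mul_of_nonneg_left h1 (by positivity)
          · exact mul_nonneg (mul_nonneg (by positivity) h2) (pow_nonneg h3 m)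
      _ = (m:ℝ)+1 := by ring
  have hTnn : 0 ≤ᵐ[volume] ((Set.Ioc r 1).indicator
      (fun s => Wfn μ s * (((m:ℝ)+1) * (r/s) * (1-r/s)^m))) :=
    ae_of_all _ (fun s => Set.indicator_nonneg hqnn s)
  rw [← ofReal_integral_eq_lintegral_ofReal hTint hTnn]
  rw [integral_indicator measurableSet_Ioc]
  rw [ENNReal.toReal_ofReal (setIntegral_nonneg measurableSet_Ioc hqnn)]

lemma densM_le (hr0 : 0 < r) {x : ℝ} (hrx : r ≤ x) (hx1 : x ≤ 1) :
    densM m r x ≤ ((m:ℝ)+1)/r := by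
  have hx0 : 0 < x := lt_of_lt_of_le hr0 hrx
  have h1 : r/x ≤ 1 := (div_le_one hx0).2 hrx
  have h2 : (0:ℝ) ≤ 1 - r/x := by linarith
  have hb1 : r/x^2 ≤ 1/r := by
    rw [div_le_div_iff₀ (by positivity) hr0]
    nlinarith
  have hrx0 : (0:ℝ) ≤ r/x := by positivity
  have hb2 : (1 - r/x)^m ≤ 1 := pow_le_one₀ h2 (by linarith)
  unfold densM
  calc ((m:ℝ)+1) * (r/x^2) * (1-r/x)^m ≤ ((m:ℝ)+1) * (1/r) * 1 := by
        apply mul_le_mul _ hb2 (pow_nonneg h2 m) (by positivity)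
        apply mul_le_mul_of_nonneg_left hb1 (by positivity)
    _ = ((m:ℝ)+1)/r := by ring

end Stmt1Aux

/-- the regret of the SPA with random reserve `μₙ*` against the `n`-fold
i.i.d. product of the isorevenue distribution with parameter `rₙ*` equals exactly
`(1 - rₙ*)^(n-1) - ∫_{rₙ*}^1 (1 - rₙ*/v)^(n-1) dv`. -/
theorem stmt1 (n : ℕ) (hn : 1 ≤ n) (rs : ℝ) (hrs : rs ∈ Set.Ioo (0:ℝ) 1)
    (hzero : gfun n rs = 0)
    (μ : Measure ℝ) [IsProbabilityMeasure μ]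
    (hμ : ∀ v : ℝ, μ (Set.Iic v) = ENNReal.ofReal (PhiExt n rs v))
    (ν : Measure ℝ) [IsProbabilityMeasure ν]
    (hν : ∀ v : ℝ, ν (Set.Iic v) = ENNReal.ofReal (isoCDF rs v)) :
    spaRegret n μ (Measure.pi fun _ : Fin n => ν)
      = (1 - rs) ^ (n - 1) - ∫ v in rs..1, (1 - rs / v) ^ (n - 1) := by
  obtain ⟨m, rfl⟩ : ∃ m, n = m + 1 := ⟨n - 1, by omega⟩
  obtain ⟨hr0, hr1⟩ := hrs
  -- basic facts about μ
  have hμ0 : μ (Set.Iic 0) = 0 := by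
    have h : PhiExt (m+1) rs 0 = 0 := by
      rw [PhiExt, if_pos (by norm_num : (0:ℝ) ≤ 1), Phi, if_pos hr0.le]
    rw [hμ 0, h, ENNReal.ofReal_zero]
  have hμ1 : μ (Set.Iic 1) = 1 := by
    have h : PhiExt (m+1) rs 1 = 1 := by
      rw [PhiExt, if_pos le_rfl]
      exact phi_one hr0 hr1 hzero
    rw [hμ 1, h, ENNReal.ofReal_one]
  have hW0 : ∀ s : ℝ, s ≤ rs → Wfn μ s = 0 := by
    intro s hs
    rw [Wfn, hμ s, PhiExt, if_pos (by linarith), Phi, if_pos hs, ENNReal.ofReal_zero,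
      ENNReal.toReal_zero]
  have hW1 : Wfn μ 1 = 1 := by rw [Wfn, hμ1, ENNReal.toReal_one]
  -- basic facts about ν
  have hν0 : ν (Set.Iic 0) = 0 := by rw [hν 0, isoCDF, if_pos hr0, ENNReal.ofReal_zero]
  have hν1 : ν (Set.Iic 1) = 1 := by
    rw [hν 1, isoCDF, if_neg (not_lt.2 hr1.le), if_neg (lt_irrefl 1), ENNReal.ofReal_one]
  -- the box
  have hbox : Set.Icc (0 : Fin (m+1) → ℝ) 1
      = Set.pi Set.univ (fun _ : Fin (m+1) => Set.Icc (0:ℝ) 1) := by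
    ext v
    simp only [Set.mem_Icc, Set.mem_pi, Set.mem_univ, true_implies, Pi.le_def]
    constructor
    · rintro ⟨h1, h2⟩ i; exact ⟨h1 i, h2 i⟩
    · intro h; exact ⟨fun i => (h i).1, fun i => (h i).2⟩
  have hνIcc : ν (Set.Icc (0:ℝ) 1) = 1 := by
    have hc := meas_compl_Icc01 hν0 hν1
    have h2 := measure_compl (measurableSet_Icc (a := (0:ℝ)) (b := 1)) (measure_ne_top ν _)
    rw [hc, measure_univ] at h2
    have h3 : (1:ℝ≥0∞) ≤ ν (Set.Icc (0:ℝ) 1) := by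
      rwa [eq_comm, tsub_eq_zero_iff_le] at h2
    exact le_antisymm prob_le_one h3
  have hGbox : (Measure.pi fun _ : Fin (m+1) => ν) (Set.Icc (0 : Fin (m+1) → ℝ) 1)ᶜ = 0 := by
    have hm : MeasurableSet (Set.Icc (0 : Fin (m+1) → ℝ) 1) := by
      rw [hbox]
      exact MeasurableSet.univ_pi (fun _ => measurableSet_Icc)
    have h1 : (Measure.pi fun _ : Fin (m+1) => ν) (Set.Icc (0 : Fin (m+1) → ℝ) 1) = 1 := by
      rw [hbox, Measure.pi_pi]
      simp [hνIcc]
    rw [measure_compl hm (measure_ne_top _ _), h1, measure_univ, tsub_self]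
  have haeboxG : ∀ᵐ v ∂(Measure.pi fun _ : Fin (m+1) => ν),
      v ∈ Set.Icc (0 : Fin (m+1) → ℝ) 1 := mem_ae_iff.2 hGbox
  -- unfold the regret and pass to the full measure
  unfold spaRegret
  rw [Measure.restrict_eq_self_of_ae_mem haeboxG]
  -- rewrite the integrand a.e.
  have hcongr : (fun v : Fin (m+1) → ℝ => top1 v
        - ∫ p in Set.Icc (0:ℝ) 1, (if p ≤ top1 v then max (top2 v) p else 0) ∂μ)
      =ᵐ[Measure.pi fun _ : Fin (m+1) => ν]
      (fun v => (top1 v - top1 v * Wfn μ (top1 v))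
        + ((∫ t in (0:ℝ)..(top1 v), Wfn μ t) - ∫ t in (0:ℝ)..(top2 v), Wfn μ t)) := by
    filter_upwards [haeboxG] with v hv
    have hb0 : 0 ≤ top2 v := top2_nonneg v
    have hba : top2 v ≤ top1 v := top2_le_top1 hv.1
    have ha1 : top1 v ≤ 1 := top1_le_one hv.2
    rw [inner_integral_eq hμ0 hμ1 hb0 hba ha1, Pfn_diff hba]
    ring
  rw [integral_congr_ae hcongr]
  -- split the integral
  have hint1 : Integrable (fun v : Fin (m+1) → ℝ => top1 v - top1 v * Wfn μ (top1 v))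
      (Measure.pi fun _ : Fin (m+1) => ν) := by
    refine ⟨(top1_meas.sub (top1_meas.mul (Wfn_meas.comp top1_meas))).aestronglyMeasurable,
      HasFiniteIntegral.of_bounded (C := 1) ?_⟩
    filter_upwards [haeboxG] with v hv
    have h1 : 0 ≤ top1 v := top1_nonneg hv.1
    have h2 : top1 v ≤ 1 := top1_le_one hv.2
    have h3 := Wfn_nonneg (μ := μ) (top1 v)
    have h4 := Wfn_le_one (μ := μ) (top1 v)
    rw [Real.norm_eq_abs, abs_le]
    constructor <;> nlinarith
  have hint2 : Integrable (fun v : Fin (m+1) → ℝ =>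
      (∫ t in (0:ℝ)..(top1 v), Wfn μ t) - ∫ t in (0:ℝ)..(top2 v), Wfn μ t)
      (Measure.pi fun _ : Fin (m+1) => ν) := by
    have hPcont : Continuous (fun x : ℝ => ∫ t in (0:ℝ)..x, Wfn μ t) :=
      intervalIntegral.continuous_primitive (fun a b => Wfn_intervalIntegrable a b) 0
    refine ⟨((hPcont.measurable.comp top1_meas).sub
      (hPcont.measurable.comp top2_meas)).aestronglyMeasurable,
      HasFiniteIntegral.of_bounded (C := 1) ?_⟩
    filter_upwards [haeboxG] with v hv
    have hba : top2 v ≤ top1 v := top2_le_top1 hv.1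
    rw [Real.norm_eq_abs, Pfn_diff hba, abs_le]
    constructor
    · have hpos : 0 ≤ ∫ t in Set.Ioc (top2 v) (top1 v), Wfn μ t :=
        setIntegral_nonneg measurableSet_Ioc (fun t _ => Wfn_nonneg t)
      linarith
    · calc ∫ s in Set.Ioc (top2 v) (top1 v), Wfn μ s
          ≤ ∫ _s in Set.Ioc (top2 v) (top1 v), (1:ℝ) :=
            setIntegral_mono_on (Wfn_integrableOn measure_Ioc_lt_top)
              (integrableOn_const measure_Ioc_lt_top.ne) measurableSet_Ioc
              (fun x _ => Wfn_le_one x)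
        _ = top1 v - top2 v := by
            rw [setIntegral_const, Real.volume_real_Ioc_of_le (by linarith), smul_eq_mul,
              mul_one]
        _ ≤ 1 := by
            have h2 : top1 v ≤ 1 := top1_le_one hv.2
            have h3 := top2_nonneg v
            linarith
  rw [integral_add hint1 hint2]
  -- evaluate the two pieces
  have hmeas_h : Measurable (fun x : ℝ => x - x * Wfn μ x) :=
    measurable_id.sub (measurable_id.mul Wfn_meas)
  have hbd_h : ∀ x ∈ Set.Icc rs 1, ‖x - x * Wfn μ x‖ ≤ 1 := by
    intro x hx
    have h3 := Wfn_nonneg (μ := μ) x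
    have h4 := Wfn_le_one (μ := μ) x
    have h0 : 0 ≤ x := le_trans hr0.le hx.1
    rw [Real.norm_eq_abs, abs_le]
    constructor <;> nlinarith [hx.2]
  have e1 : ∫ v, (top1 v - top1 v * Wfn μ (top1 v)) ∂(Measure.pi fun _ : Fin (m+1) => ν)
      = ∫ s in Set.Ioc rs 1, densM m rs s * (s - s * Wfn μ s) := by
    have h := integral_measM (m := m) hr0 hr1 hν hmeas_h hbd_h
    rw [h, hW1]
    ring
  have e2 := I3_eq (m := m) hr0 hr1 hW0 hν haeboxG
  rw [e1, e2]
  -- combine the two set integrals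
  rw [show (∫ s in Set.Ioc rs 1, densM m rs s * (s - s * Wfn μ s))
      = ∫ s in Set.Ioo rs 1, densM m rs s * (s - s * Wfn μ s) from integral_Ioc_eq_integral_Ioo,
    show (∫ s in Set.Ioc rs 1, Wfn μ s * (((m:ℝ)+1) * (rs/s) * (1-rs/s)^m))
      = ∫ s in Set.Ioo rs 1, Wfn μ s * (((m:ℝ)+1) * (rs/s) * (1-rs/s)^m)
      from integral_Ioc_eq_integral_Ioo]
  have hintA : IntegrableOn (fun s => densM m rs s * (s - s * Wfn μ s))
      (Set.Ioo rs 1) volume := by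
    refine ⟨((((measurable_const.mul
      (measurable_const.div (measurable_id.pow_const 2))).mul
      ((measurable_const.sub (measurable_const.div measurable_id)).pow_const m))).mul
      (measurable_id.sub (measurable_id.mul Wfn_meas))).aestronglyMeasurable, ?_⟩
    apply HasFiniteIntegral.restrict_of_bounded (C := ((m:ℝ)+1)/rs) measure_Ioo_lt_top
    rw [ae_restrict_iff' measurableSet_Ioo]
    apply ae_of_all
    intro x hx
    have hb := hbd_h x ⟨hx.1.le, hx.2.le⟩
    rw [Real.norm_eq_abs] at hb ⊢
    rw [abs_mul]
    calc |densM m rs x| * |x - x * Wfn μ x| ≤ (((m:ℝ)+1)/rs) * 1 := by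
          apply mul_le_mul _ hb (abs_nonneg _) (by positivity)
          rw [abs_of_nonneg (densM_nonneg hr0 hx.1.le)]
          exact densM_le hr0 hx.1.le hx.2.le
      _ = ((m:ℝ)+1)/rs := by ring
  have hintB : IntegrableOn (fun s => Wfn μ s * (((m:ℝ)+1) * (rs/s) * (1-rs/s)^m))
      (Set.Ioo rs 1) volume := by
    refine ⟨(Wfn_meas.mul ((measurable_const.mul
      (measurable_const.div measurable_id)).mul
      ((measurable_const.sub (measurable_const.div measurable_id)).pow_const m))).aestronglyMeasurable, ?_⟩
    apply HasFiniteIntegral.restrict_of_bounded (C := (m:ℝ)+1) measure_Ioo_lt_top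
    rw [ae_restrict_iff' measurableSet_Ioo]
    apply ae_of_all
    intro x hx
    have hx0 : 0 < x := lt_trans hr0 hx.1
    have h1 : rs/x ≤ 1 := (div_le_one hx0).2 hx.1.le
    have h2 : (0:ℝ) ≤ rs/x := by positivity
    have h3 : (0:ℝ) ≤ 1 - rs/x := by linarith
    rw [Real.norm_eq_abs, abs_of_nonneg (mul_nonneg (Wfn_nonneg x)
      (mul_nonneg (mul_nonneg (by positivity) h2) (pow_nonneg h3 m)))]
    calc Wfn μ x * (((m:ℝ)+1) * (rs/x) * (1-rs/x)^m)
        ≤ 1 * (((m:ℝ)+1) * 1 * 1) := by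
          apply mul_le_mul (Wfn_le_one x) _ _ zero_le_one
          · apply mul_le_mul _ (pow_le_one₀ h3 (by linarith)) (pow_nonneg h3 m) (by positivity)
            apply mul_le_mul_of_nonneg_left h1 (by positivity)
          · exact mul_nonneg (mul_nonneg (by positivity) h2) (pow_nonneg h3 m)
      _ = (m:ℝ)+1 := by ring
  rw [← integral_add hintA hintB]
  have hptw : ∀ s ∈ Set.Ioo rs 1,
      densM m rs s * (s - s * Wfn μ s) + Wfn μ s * (((m:ℝ)+1) * (rs/s) * (1-rs/s)^m)
        = ((m:ℝ)+1) * (rs/s) * (1-rs/s)^m := by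
    intro s hs
    have hs0 : s ≠ 0 := (lt_trans hr0 hs.1).ne'
    have hds : densM m rs s * s = ((m:ℝ)+1)*(rs/s)*(1-rs/s)^m := by
      unfold densM
      field_simp
    have h1 : densM m rs s * (s - s * Wfn μ s)
        = (densM m rs s * s) * (1 - Wfn μ s) := by ring
    rw [h1, hds]
    ring
  rw [setIntegral_congr_fun measurableSet_Ioo hptw]
  rw [← integral_Ioc_eq_integral_Ioo, ← intervalIntegral.integral_of_le hr1.le]
  -- the final calculus step
  have hne : ∀ s ∈ Set.uIcc rs 1, s ≠ 0 := by
    rw [Set.uIcc_of_le hr1.le]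
    intro s hs
    have := hs.1
    intro h
    rw [h] at this
    linarith
  have hq1 : IntervalIntegrable (fun s : ℝ => ((m:ℝ)+1) * (rs/s) * (1-rs/s)^m) volume rs 1 := by
    apply ContinuousOn.intervalIntegrable
    exact (continuousOn_const.mul
      (continuousOn_const.div continuousOn_id hne)).mul
      ((continuousOn_const.sub (continuousOn_const.div continuousOn_id hne)).pow m)
  have hq2 : IntervalIntegrable (fun s : ℝ => (1-rs/s)^m) volume rs 1 := by
    apply ContinuousOn.intervalIntegrable
    exact (continuousOn_const.sub (continuousOn_const.div continuousOn_id hne)).pow m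
  have hmain := ftc_main hr0 hr1 hzero
  rw [intervalIntegral.integral_add hq1 hq2] at hmain
  simp only [Nat.add_sub_cancel]
  linarith


end
end

section
/- For every integer n ≥ 1, the function g_n(r) = (1−r)^{n−1} + log r + Σ_{k=1}^{n−1} (1−r)^k/k has exactly one zero in the open interval (0,1), and this zero lies in (0, 1/n). Moreover, for n ≥ 2, g_n is strictly increasing on (0, 1/n), strictly decreasing on (1/n, 1), g_n(r) → −∞ as r ↓ 0, and g_n(r) → 0 as r ↑ 1. -/
open MeasureTheory Real Set ENNReal

noncomputable section

lemma gfun_one (r : ℝ) : gfun 1 r = 1 + Real.log r := by simp [gfun]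

lemma gfun_contOn (n : ℕ) : ContinuousOn (gfun n) {(0:ℝ)}ᶜ := by
  have h1 : Continuous fun r : ℝ => (1 - r) ^ (n - 1) := by continuity
  have h3 : Continuous fun r : ℝ => ∑ k ∈ Finset.Icc 1 (n-1), (1 - r) ^ k / (k : ℝ) :=
    continuous_finset_sum _ fun k _ => by continuity
  exact (h1.continuousOn.add Real.continuousOn_log).add h3.continuousOn

lemma sum_pow_shift (x : ℝ) (m : ℕ) :
    ∑ k ∈ Finset.Icc 1 (m+1), x ^ (k-1) = ∑ j ∈ Finset.range (m+1), x ^ j := by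
  induction m with
  | zero => simp
  | succ m ih =>
      rw [Finset.sum_Icc_succ_top (by omega : 1 ≤ m + 2), ih]
      conv_rhs => rw [Finset.sum_range_succ]
      norm_num

lemma gfun_hasDerivAt (m : ℕ) {r : ℝ} (hr : 0 < r) : HasDerivAt (gfun (m + 2))
    ((1 - r) ^ m * (1 - (m + 2 : ℝ) * r) / r) r := by
  have hgeq : gfun (m+2) = fun r : ℝ =>
      (1 - r) ^ (m+1) + Real.log r + ∑ k ∈ Finset.Icc 1 (m+1), (1 - r) ^ k / (k:ℝ) := by
    funext r; simp [gfun]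
  have h1 : HasDerivAt (fun r : ℝ => (1 - r) ^ (m+1))
      (((m:ℝ)+1) * (1 - r) ^ m * (-1)) r := by
    have := ((hasDerivAt_id r).const_sub 1).pow (m+1)
    simpa [Pi.pow_def] using this
  have h2 : HasDerivAt Real.log r⁻¹ r := Real.hasDerivAt_log hr.ne'
  have h3 : HasDerivAt (fun r : ℝ => ∑ k ∈ Finset.Icc 1 (m+1), (1 - r) ^ k / (k:ℝ))
      (∑ k ∈ Finset.Icc 1 (m+1), ((k:ℝ) * (1 - r) ^ (k-1) * (-1)) / (k:ℝ)) r := by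
    apply HasDerivAt.fun_sum
    intro k hk
    have := (((hasDerivAt_id r).const_sub 1).pow k).div_const (k:ℝ)
    simpa using this
  have h := (h1.add h2).add h3
  replace h : HasDerivAt (gfun (m+2)) (((m:ℝ)+1) * (1 - r) ^ m * (-1) + r⁻¹ +
      ∑ k ∈ Finset.Icc 1 (m+1), ((k:ℝ) * (1 - r) ^ (k-1) * (-1)) / (k:ℝ)) r := by
    rw [hgeq]; exact h
  have hsum : ∑ k ∈ Finset.Icc 1 (m+1), ((k:ℝ) * (1 - r) ^ (k-1) * (-1)) / (k:ℝ)
      = -(((1-r) ^ (m+1) - 1) / ((1-r) - 1)) := by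
    have e1 : ∀ k ∈ Finset.Icc 1 (m+1),
        ((k:ℝ) * (1 - r) ^ (k-1) * (-1)) / (k:ℝ) = -(1-r) ^ (k-1) := by
      intro k hk
      have hk1 : 1 ≤ k := (Finset.mem_Icc.mp hk).1
      have hk0 : (k:ℝ) ≠ 0 := Nat.cast_ne_zero.mpr (by omega)
      field_simp
    rw [Finset.sum_congr rfl e1]
    have : ∑ k ∈ Finset.Icc 1 (m+1), (-(1-r) ^ (k-1)) = -∑ k ∈ Finset.Icc 1 (m+1), (1-r) ^ (k-1) := by
      simp
    rw [this, sum_pow_shift, geom_sum_eq (by intro h; apply hr.ne'; linarith) (m+1)]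
  rw [hsum] at h
  convert h using 1
  have hr0 : r ≠ 0 := hr.ne'
  have hrr : r * r ≠ 0 := mul_ne_zero hr0 hr0
  rw [show (1:ℝ)-r-1 = -r by ring, div_neg, neg_neg, eq_comm, inv_eq_one_div, add_assoc]
  rw [div_add_div _ _ hr0 hr0, add_div' _ _ _ hrr, div_eq_div_iff hrr hr0]
  ring

lemma gfun_mono (n : ℕ) (hn : 1 ≤ n) : StrictMonoOn (gfun n) (Set.Ioc 0 (1 / (n:ℝ))) := by
  rcases Nat.lt_or_ge n 2 with h2 | h2
  · have hn1 : n = 1 := by omega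
    subst hn1
    intro a ha b hb hab
    rw [gfun_one, gfun_one]
    have := Real.log_lt_log ha.1 hab
    linarith
  · obtain ⟨m, rfl⟩ : ∃ m, n = m + 2 := ⟨n - 2, by omega⟩
    apply strictMonoOn_of_deriv_pos (convex_Ioc _ _)
    · exact (gfun_contOn _).mono (fun x hx => ne_of_gt hx.1)
    · intro x hx
      rw [interior_Ioc] at hx
      have hx0 : 0 < x := hx.1
      have hm0 : (0:ℝ) ≤ (m:ℝ) := Nat.cast_nonneg m
      have hxn : x * ((m:ℝ) + 2) < 1 := by
        have h0 : (0:ℝ) < ((m+2:ℕ):ℝ) := by positivity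
        have := (lt_div_iff₀ h0).mp hx.2
        push_cast at this
        linarith
      have hx1 : x < 1 := by nlinarith
      rw [(gfun_hasDerivAt m hx0).deriv]
      exact div_pos (mul_pos (pow_pos (by linarith) m) (by push_cast; nlinarith)) hx0

lemma gfun_anti (m : ℕ) : StrictAntiOn (gfun (m+2)) (Set.Ico (1 / ((m+2:ℕ):ℝ)) 1) := by
  apply strictAntiOn_of_deriv_neg (convex_Ico _ _)
  · apply (gfun_contOn _).mono
    intro x hx
    have h0 : (0:ℝ) < 1 / ((m+2:ℕ):ℝ) := by positivity
    exact ne_of_gt (lt_of_lt_of_le h0 hx.1)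
  · intro x hx
    rw [interior_Ico] at hx
    have h0 : (0:ℝ) < ((m+2:ℕ):ℝ) := by positivity
    have hx0 : 0 < x := lt_trans (by positivity) hx.1
    have hxn : 1 < x * ((m:ℝ) + 2) := by
      have := (div_lt_iff₀ h0).mp hx.1
      push_cast at this
      linarith
    rw [(gfun_hasDerivAt m hx0).deriv]
    exact div_neg_of_neg_of_pos
      (mul_neg_of_pos_of_neg (pow_pos (by linarith [hx.2]) m) (by push_cast; nlinarith)) hx0

lemma gfun_tendsto_atBot (n : ℕ) : Filter.Tendsto (gfun n) (nhdsWithin 0 (Set.Ioi 0)) Filter.atBot := by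
  have hc : Continuous fun r : ℝ =>
      (1 - r) ^ (n - 1) + ∑ k ∈ Finset.Icc 1 (n-1), (1 - r) ^ k / (k : ℝ) := by
    apply Continuous.add
    · continuity
    · exact continuous_finset_sum _ fun k _ => by continuity
  have h := Filter.Tendsto.add_atBot
    ((hc.tendsto 0).mono_left nhdsWithin_le_nhds) Real.tendsto_log_nhdsGT_zero
  apply h.congr
  intro r
  simp [gfun]
  ring

lemma gfun_tendsto_one (m : ℕ) :
    Filter.Tendsto (gfun (m+2)) (nhdsWithin 1 (Set.Iio 1)) (nhds 0) := by
  have hc : ContinuousAt (gfun (m+2)) 1 :=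
    (gfun_contOn _).continuousAt (compl_singleton_mem_nhds (by norm_num))
  have hval : gfun (m+2) 1 = 0 := by
    unfold gfun
    rw [Finset.sum_eq_zero, Real.log_one]
    · norm_num
    · intro k hk
      have hk1 : 1 ≤ k := (Finset.mem_Icc.mp hk).1
      rw [show (1:ℝ) - 1 = 0 by ring, zero_pow (by omega), zero_div]
  exact hval ▸ (hc.tendsto.mono_left nhdsWithin_le_nhds)

lemma gfun_pos (m : ℕ) : ∀ r ∈ Set.Ico (1 / ((m+2:ℕ):ℝ)) 1, 0 < gfun (m+2) r := by
  intro r hr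
  set s := (r+1)/2 with hs
  have hrs : r < s := by rw [hs]; linarith [hr.2]
  have hs1 : s < 1 := by rw [hs]; linarith [hr.2]
  have hsmem : s ∈ Set.Ico (1 / ((m+2:ℕ):ℝ)) 1 := ⟨le_trans hr.1 hrs.le, hs1⟩
  have h0 : 0 ≤ gfun (m+2) s := by
    apply le_of_tendsto (gfun_tendsto_one m)
    filter_upwards [Ioo_mem_nhdsLT_of_mem (⟨hs1, le_refl 1⟩ : (1:ℝ) ∈ Set.Ioc s 1)] with t ht
    exact (gfun_anti m hsmem ⟨le_trans hsmem.1 ht.1.le, ht.2⟩ ht.1).le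
  linarith [gfun_anti m hr hsmem hrs]

/-- `gₙ` has exactly one zero in `(0,1)`, lying in `(0, 1/n)`; for `n ≥ 2`,
`gₙ` is strictly increasing on `(0, 1/n)`, strictly decreasing on `(1/n, 1)`,
tends to `-∞` as `r ↓ 0` and tends to `0` as `r ↑ 1`. -/
theorem stmt3 (n : ℕ) (hn : 1 ≤ n) :
    (∃! r : ℝ, r ∈ Set.Ioo (0:ℝ) 1 ∧ gfun n r = 0) ∧
    (∀ r ∈ Set.Ioo (0:ℝ) 1, gfun n r = 0 → r ∈ Set.Ioo (0:ℝ) (1 / n)) ∧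
    (2 ≤ n →
      StrictMonoOn (gfun n) (Set.Ioo (0:ℝ) (1 / n)) ∧
      StrictAntiOn (gfun n) (Set.Ioo ((1:ℝ) / n) 1) ∧
      Filter.Tendsto (gfun n) (nhdsWithin 0 (Set.Ioi 0)) Filter.atBot ∧
      Filter.Tendsto (gfun n) (nhdsWithin 1 (Set.Iio 1)) (nhds 0)) := by
  have hnpos : (0:ℝ) < (n:ℝ) := by exact_mod_cast Nat.lt_of_lt_of_le Nat.zero_lt_one hn
  have hmono : StrictMonoOn (gfun n) (Set.Ioc 0 (1 / (n:ℝ))) := gfun_mono n hn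
  have hn1le : (1:ℝ) / n ≤ 1 := (div_le_one hnpos).mpr (by exact_mod_cast hn)
  have hloc : ∀ r ∈ Set.Ioo (0:ℝ) 1, gfun n r = 0 → r ∈ Set.Ioo (0:ℝ) (1 / (n:ℝ)) := by
    intro r hr hgr
    rcases Nat.lt_or_ge n 2 with h2 | h2
    · have hn1 : n = 1 := by omega
      subst hn1
      simpa using hr
    · obtain ⟨m, rfl⟩ : ∃ m, n = m + 2 := ⟨n - 2, by omega⟩
      refine ⟨hr.1, ?_⟩
      by_contra hge
      push_neg at hge
      have := gfun_pos m r ⟨hge, hr.2⟩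
      linarith
  have hval : 0 < gfun n (1 / (n:ℝ)) := by
    rcases Nat.lt_or_ge n 2 with h2 | h2
    · have hn1 : n = 1 := by omega
      subst hn1
      norm_num [gfun_one]
    · obtain ⟨m, rfl⟩ : ∃ m, n = m + 2 := ⟨n - 2, by omega⟩
      apply gfun_pos m
      refine ⟨le_refl _, ?_⟩
      rw [div_lt_one (by positivity)]
      exact_mod_cast (by omega : 1 < m + 2)
  obtain ⟨a, hamem, hga⟩ : ∃ a, a ∈ Set.Ioo (0:ℝ) (1 / (n:ℝ)) ∧ gfun n a < 0 := by
    have h1 : ∀ᶠ r in nhdsWithin (0:ℝ) (Set.Ioi 0), gfun n r < 0 :=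
      (gfun_tendsto_atBot n).eventually (Filter.eventually_lt_atBot 0)
    have h2 : ∀ᶠ r in nhdsWithin (0:ℝ) (Set.Ioi 0), r ∈ Set.Ioo (0:ℝ) (1 / (n:ℝ)) :=
      Ioo_mem_nhdsGT_of_mem ⟨le_refl 0, by positivity⟩
    exact (h2.and h1).exists
  have hcont : ContinuousOn (gfun n) (Set.Icc a (1 / (n:ℝ))) :=
    (gfun_contOn n).mono (fun x hx => ne_of_gt (lt_of_lt_of_le hamem.1 hx.1))
  obtain ⟨c, hc, hgc⟩ := intermediate_value_Ioo hamem.2.le hcont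
    (⟨hga, hval⟩ : (0:ℝ) ∈ Set.Ioo (gfun n a) (gfun n (1 / (n:ℝ))))
  have hc0n : c ∈ Set.Ioo (0:ℝ) (1 / (n:ℝ)) := ⟨lt_trans hamem.1 hc.1, hc.2⟩
  have hc01 : c ∈ Set.Ioo (0:ℝ) 1 := ⟨hc0n.1, lt_of_lt_of_le hc0n.2 hn1le⟩
  refine ⟨⟨c, ⟨hc01, hgc⟩, ?_⟩, hloc, ?_⟩
  · rintro r ⟨hr01, hgr⟩
    have hr' := hloc r hr01 hgr
    exact hmono.injOn ⟨hr'.1, hr'.2.le⟩ ⟨hc0n.1, hc0n.2.le⟩ (by rw [hgr, hgc])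
  · intro h2
    obtain ⟨m, rfl⟩ : ∃ m, n = m + 2 := ⟨n - 2, by omega⟩
    exact ⟨hmono.mono Set.Ioo_subset_Ioc_self, (gfun_anti m).mono Set.Ioo_subset_Ico_self,
      gfun_tendsto_atBot _, gfun_tendsto_one m⟩


end
end

section
/- For every integer n ≥ 1, the function Φ_n^* is differentiable at every v ∈ (r_n^*, 1) and satisfies the linear ordinary differential equation (Φ_n^*)'(v) + ((n−1) r_n^* / (v (v − r_n^*))) · Φ_n^*(v) = 1/v for all v ∈ (r_n^*, 1); moreover Φ_n^*(v) → 0 as v ↓ r_n^* and Φ_n^*(1) = 1. -/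
open MeasureTheory Real Set ENNReal

noncomputable section

lemma aux_pow (x : ℝ) (hx : x ≠ 0) {k m : ℕ} (hk : k ≤ m) :
    x⁻¹ ^ m * x ^ k = x⁻¹ ^ (m - k) := by
  have h : x⁻¹ ^ m = x⁻¹ ^ (m - k) * x⁻¹ ^ k := by
    rw [← pow_add]; congr 1; omega
  rw [h, mul_assoc, ← mul_pow, inv_mul_cancel₀ hx, one_pow, mul_one]

lemma icc_sum_eq (m : ℕ) (f : ℕ → ℝ) :
    ∑ k ∈ Finset.Icc 1 m, f k = ∑ i ∈ Finset.range m, f (i + 1) := by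
  rw [← Finset.Ico_add_one_right_eq_Icc, Finset.sum_Ico_eq_sum_range]
  simp [Nat.add_comm]

lemma phi_hasSum (n : ℕ) (rs v : ℝ) (h0 : 0 < rs) (hv : rs < v) :
    HasSum (fun k : ℕ => ((v - rs) / v) ^ (k + 1) / ((k + (n - 1) + 1 : ℕ) : ℝ))
      (Phi n rs v) := by
  have hv0 : 0 < v := h0.trans hv
  have hvr : 0 < v - rs := sub_pos.2 hv
  set m := n - 1 with hm
  set x : ℝ := (v - rs) / v with hxdef
  have hx0 : 0 < x := div_pos hvr hv0
  have hx1 : x < 1 := (div_lt_one hv0).2 (by linarith)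
  have hxne : x ≠ 0 := ne_of_gt hx0
  have hux : v / (v - rs) = x⁻¹ := by rw [hxdef, inv_div]
  have hxx : x⁻¹ * x = 1 := inv_mul_cancel₀ hxne
  have hlog : HasSum (fun k : ℕ => x ^ (k + 1) / ((k : ℝ) + 1)) (Real.log (v / rs)) := by
    have h1 := Real.hasSum_pow_div_log_of_abs_lt_one (x := x)
      (by rw [abs_of_pos hx0]; exact hx1)
    have h2 : (1 : ℝ) - x = rs / v := by rw [hxdef]; field_simp; ring
    have h3 : -Real.log (1 - x) = Real.log (v / rs) := by
      rw [h2, ← Real.log_inv, inv_div]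
    rwa [h3] at h1
  have hs := hlog.mul_left (x⁻¹ ^ m)
  have hshift := (hasSum_nat_add_iff'
    (f := fun k : ℕ => x⁻¹ ^ m * (x ^ (k + 1) / ((k : ℝ) + 1))) m).mpr hs
  have hval : Phi n rs v = x⁻¹ ^ m * Real.log (v / rs)
      - ∑ i ∈ Finset.range m, x⁻¹ ^ m * (x ^ (i + 1) / ((i : ℝ) + 1)) := by
    rw [Phi, if_neg (not_le.2 hv), hux, ← hm, icc_sum_eq]
    congr 1
    refine Finset.sum_congr rfl fun i hi => ?_
    have him : i + 1 ≤ m := Finset.mem_range.1 hi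
    rw [mul_div_assoc', aux_pow x hxne him]
    push_cast
    ring
  have hfun : (fun k : ℕ => ((v - rs) / v) ^ (k + 1) / ((k + (n - 1) + 1 : ℕ) : ℝ))
      = fun k : ℕ => x⁻¹ ^ m * (x ^ (k + m + 1) / ((k + m : ℕ) + 1 : ℝ)) := by
    funext k
    have e2 : x⁻¹ ^ m * x ^ (k + m + 1) = x ^ (k + 1) := by
      have h4 : x ^ (k + m + 1) = x ^ m * x ^ (k + 1) := by rw [← pow_add]; congr 1; omega
      rw [h4, ← mul_assoc, ← mul_pow, hxx, one_pow, one_mul]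
    rw [mul_div_assoc', e2, ← hxdef, ← hm]
    push_cast
    ring
  rw [hval, hfun]
  exact hshift

/-- `Φₙ*` is differentiable on `(rₙ*, 1)` and satisfies there the ODE
`(Φₙ*)'(v) + ((n-1) rₙ* / (v (v - rₙ*))) Φₙ*(v) = 1/v`; moreover `Φₙ*(v) → 0` as
`v ↓ rₙ*` and `Φₙ*(1) = 1`. -/
theorem stmt4 (n : ℕ) (hn : 1 ≤ n) (rs : ℝ) (hrs : rs ∈ Set.Ioo (0:ℝ) 1)
    (hzero : gfun n rs = 0) :
    (∀ v ∈ Set.Ioo rs (1:ℝ), ∃ d : ℝ, HasDerivAt (Phi n rs) d v ∧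
      d + ((n:ℝ) - 1) * rs / (v * (v - rs)) * Phi n rs v = 1 / v) ∧
    Filter.Tendsto (Phi n rs) (nhdsWithin rs (Set.Ioi rs)) (nhds 0) ∧
    Phi n rs 1 = 1 := by
  obtain ⟨hrs0, hrs1⟩ := hrs
  have hrsne : rs ≠ 0 := ne_of_gt hrs0
  obtain ⟨m, rfl⟩ : ∃ m, n = m + 1 := ⟨n - 1, by omega⟩
  have hm1 : ((m + 1 : ℕ) : ℝ) - 1 = (m : ℝ) := by push_cast; ring
  refine ⟨?_, ?_, ?_⟩
  · -- ODE part
    rintro v ⟨hv1, hv2⟩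
    have hv0 : 0 < v := hrs0.trans hv1
    have hvr : 0 < v - rs := sub_pos.2 hv1
    have hvrne : v - rs ≠ 0 := ne_of_gt hvr
    have hvne : v ≠ 0 := ne_of_gt hv0
    have hu : HasDerivAt (fun y : ℝ => y / (y - rs)) (-rs / (v - rs) ^ 2) v := by
      have h2 : HasDerivAt (fun y : ℝ => y - rs) 1 v := (hasDerivAt_id v).sub_const rs
      have h3 := (hasDerivAt_id v).div h2 hvrne
      rw [show -rs / (v - rs) ^ 2 = (1 * (v - rs) - id v * 1) / (v - rs) ^ 2 by simp only [id]; ring]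
      exact h3
    have hupow : ∀ j : ℕ, HasDerivAt (fun y : ℝ => (y / (y - rs)) ^ j)
        ((j : ℝ) * (v / (v - rs)) ^ (j - 1) * (-rs / (v - rs) ^ 2)) v := fun j => hu.pow j
    have hlog : HasDerivAt (fun y : ℝ => Real.log (y / rs)) (1 / v) v := by
      have h1 : HasDerivAt (fun y : ℝ => y / rs) (1 / rs) v := by
        simpa using (hasDerivAt_id v).div_const rs
      have h2 := h1.log (by positivity : v / rs ≠ 0)
      convert h2 using 1
      field_simp
    have hF := ((hupow m).mul hlog).sub
      (HasDerivAt.fun_sum (fun k _ => (hupow (m - k)).const_mul (1 / (k:ℝ)))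
        (u := Finset.Icc 1 m))
    have hPhi' : HasDerivAt (Phi (m+1) rs)
        (((m : ℝ) * (v / (v - rs)) ^ (m - 1) * (-rs / (v - rs) ^ 2)) * Real.log (v / rs)
          + (v / (v - rs)) ^ m * (1 / v)
          - ∑ k ∈ Finset.Icc 1 m, (1 / (k:ℝ)) *
              (((m - k : ℕ) : ℝ) * (v / (v - rs)) ^ (m - k - 1) * (-rs / (v - rs) ^ 2))) v := by
      refine hF.congr_of_eventuallyEq ?_
      filter_upwards [Ioi_mem_nhds hv1] with y hy
      rw [Phi, if_neg (not_le.2 hy)]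
      simp only [Nat.add_sub_cancel]
      rfl
    refine ⟨_, hPhi', ?_⟩
    rw [Phi, if_neg (not_le.2 hv1)]
    simp only [Nat.add_sub_cancel]
    rw [show ((m+1:ℕ):ℝ) - 1 = (m:ℝ) by push_cast; ring]
    rcases Nat.eq_zero_or_pos m with rfl | hmpos
    · simp [Finset.Icc_eq_empty_of_lt]
    · have hu1 : v / (v - rs) ≠ 1 := by
        intro h
        rw [div_eq_one_iff_eq hvrne] at h
        linarith
      have hterm : ∀ k ∈ Finset.Icc 1 m,
          (1 / (k:ℝ)) * (((m - k : ℕ) : ℝ) * (v / (v - rs)) ^ (m - k - 1) * (-rs / (v - rs) ^ 2))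
          + (m : ℝ) * rs / (v * (v - rs)) * ((1 / (k:ℝ)) * (v / (v - rs)) ^ (m - k))
          = rs / (v * (v - rs)) * (v / (v - rs)) ^ (m - k) := by
        intro k hk
        obtain ⟨hk1, hk2⟩ := Finset.mem_Icc.1 hk
        have hkne : (k:ℝ) ≠ 0 := Nat.cast_ne_zero.2 (by omega)
        rcases eq_or_lt_of_le hk2 with rfl | hklt
        · simp only [Nat.sub_self, Nat.cast_zero, pow_zero, zero_mul, mul_zero, mul_one, zero_add]
          field_simp
        · have h2 : ((m - k : ℕ) : ℝ) = (m : ℝ) - (k : ℝ) := by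
            rw [Nat.cast_sub hk2]
          obtain ⟨j, hj⟩ : ∃ j, m - k = j + 1 := ⟨m - k - 1, by omega⟩
          have hj1 : m - k - 1 = j := by omega
          rw [h2, hj1, hj, pow_succ]
          simp only [div_pow]
          field_simp
          ring
      have hB : (∑ k ∈ Finset.Icc 1 m, (1 / (k:ℝ)) *
              (((m - k : ℕ) : ℝ) * (v / (v - rs)) ^ (m - k - 1) * (-rs / (v - rs) ^ 2)))
          + (m : ℝ) * rs / (v * (v - rs)) *
            (∑ k ∈ Finset.Icc 1 m, (1 / (k:ℝ)) * (v / (v - rs)) ^ (m - k))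
          = ((v / (v - rs)) ^ m - 1) / v := by
        rw [Finset.mul_sum, ← Finset.sum_add_distrib, Finset.sum_congr rfl hterm,
          ← Finset.mul_sum]
        have hre : ∑ k ∈ Finset.Icc 1 m, (v / (v - rs)) ^ (m - k)
            = ∑ i ∈ Finset.range m, (v / (v - rs)) ^ i := by
          rw [icc_sum_eq]
          rw [← Finset.sum_range_reflect (fun i => (v / (v - rs)) ^ i) m]
          refine Finset.sum_congr rfl fun i hi => ?_
          congr 1
          omega
        rw [hre, geom_sum_eq hu1]
        have hne2 : v / (v - rs) - 1 ≠ 0 := sub_ne_zero.2 hu1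
        have e : v / (v - rs) - 1 = rs / (v - rs) := by field_simp; ring
        rw [e]
        field_simp
      have hA : (m : ℝ) * (v / (v - rs)) ^ (m - 1) * (-rs / (v - rs) ^ 2) * Real.log (v / rs)
          + (m : ℝ) * rs / (v * (v - rs)) * ((v / (v - rs)) ^ m * Real.log (v / rs)) = 0 := by
        obtain ⟨m', rfl⟩ : ∃ m', m = m' + 1 := ⟨m - 1, by omega⟩
        simp only [Nat.add_sub_cancel, pow_succ]
        field_simp
        ring
      linear_combination hA - hB
  · -- limit part
    have key : ∀ v ∈ Set.Ioi rs, 0 ≤ Phi (m+1) rs v ∧ Phi (m+1) rs v ≤ (v - rs) / rs := by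
      intro v hv
      have hv0 : 0 < v := hrs0.trans hv
      have hvr : 0 < v - rs := sub_pos.2 hv
      have H := phi_hasSum (m+1) rs v hrs0 hv
      have hx0 : 0 < (v - rs) / v := div_pos hvr hv0
      have hx1 : (v - rs) / v < 1 := (div_lt_one hv0).2 (by linarith)
      constructor
      · exact H.nonneg fun k => by positivity
      · have hg : HasSum (fun k : ℕ => ((v - rs) / v) ^ (k + 1))
            ((v - rs) / v * (1 - (v - rs) / v)⁻¹) := by
          simpa only [← pow_succ'] using
            (hasSum_geometric_of_lt_one hx0.le hx1).mul_left ((v - rs) / v)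
        have hle := hasSum_le (fun k => ?_) H hg
        · have h2 : (1 : ℝ) - (v - rs) / v = rs / v := by field_simp; ring
          rw [h2, inv_div] at hle
          calc Phi (m+1) rs v ≤ (v - rs) / v * (v / rs) := hle
            _ = (v - rs) / rs := by field_simp
        · refine div_le_self (by positivity) ?_
          exact_mod_cast Nat.one_le_iff_ne_zero.2 (by omega)
    have h0 : ∀ᶠ v in nhdsWithin rs (Set.Ioi rs), 0 ≤ Phi (m+1) rs v :=
      eventually_nhdsWithin_of_forall fun v hv => (key v hv).1
    have h1 : ∀ᶠ v in nhdsWithin rs (Set.Ioi rs), Phi (m+1) rs v ≤ (v - rs) / rs :=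
      eventually_nhdsWithin_of_forall fun v hv => (key v hv).2
    have hg0 : Filter.Tendsto (fun v : ℝ => (v - rs) / rs)
        (nhdsWithin rs (Set.Ioi rs)) (nhds 0) := by
      have h3 : Filter.Tendsto (fun v : ℝ => (v - rs) / rs) (nhds rs) (nhds ((rs - rs) / rs)) :=
        ((continuous_id.sub continuous_const).div_const rs).tendsto rs
      simpa using h3.mono_left nhdsWithin_le_nhds
    exact squeeze_zero' h0 h1 hg0
  · -- Phi 1 = 1
    rw [Phi, if_neg (not_le.2 hrs1)]
    simp only [Nat.add_sub_cancel]
    have h1r : (0:ℝ) < 1 - rs := by linarith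
    have h1rne : (1:ℝ) - rs ≠ 0 := ne_of_gt h1r
    have hgl : Real.log rs
        = -((1 - rs) ^ m + ∑ k ∈ Finset.Icc 1 m, (1 - rs) ^ k / (k:ℝ)) := by
      have h := hzero
      rw [gfun] at h
      simp only [Nat.add_sub_cancel] at h
      linarith
    rw [show Real.log (1 / rs) = -Real.log rs by rw [one_div, Real.log_inv], hgl, neg_neg,
      show (1:ℝ) / (1 - rs) = (1 - rs)⁻¹ from one_div _, mul_add]
    have e1 : ((1 - rs)⁻¹) ^ m * (1 - rs) ^ m = 1 := by
      rw [← mul_pow, inv_mul_cancel₀ h1rne, one_pow]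
    have e2 : ∀ k ∈ Finset.Icc 1 m,
        (1 - rs)⁻¹ ^ m * ((1 - rs) ^ k / (k:ℝ)) = (1 / (k:ℝ)) * (1 - rs)⁻¹ ^ (m - k) := by
      intro k hk
      obtain ⟨-, hk2⟩ := Finset.mem_Icc.1 hk
      rw [mul_div_assoc', aux_pow _ h1rne hk2]
      ring
    rw [e1, Finset.mul_sum, Finset.sum_congr rfl e2]
    ring


end
end

section
/- Let n ≥ 2 be an integer and let u_0, u_1, …, u_n be nonnegative real numbers satisfying u_0·u_{k+1} ≥ u_1·u_k for every 0 ≤ k ≤ n−1. Then u_0^{n−1} · ( u_0 + Σ_{k=1}^{n} C(n,k)·u_k ) ≥ (u_0 + u_1)^n, where C(n,k) denotes the binomial coefficient. In particular, if additionally u_0 + Σ_{k=1}^{n} C(n,k)·u_k = 1, then u_0^{n−1} ≥ (u_0 + u_1)^n. -/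
open MeasureTheory Real Set ENNReal

noncomputable section

/-- if `u₀,…,uₙ ≥ 0` satisfy the affiliation inequalities
`u₀ u_{k+1} ≥ u₁ u_k` for `0 ≤ k ≤ n-1`, then
`u₀^{n-1} (u₀ + Σ_{k=1}^n C(n,k) u_k) ≥ (u₀ + u₁)^n`; in particular if
`u₀ + Σ_{k=1}^n C(n,k) u_k = 1` then `u₀^{n-1} ≥ (u₀ + u₁)^n`. -/
theorem stmt12 (n : ℕ) (hn : 2 ≤ n) (u : ℕ → ℝ) (hu : ∀ k ≤ n, 0 ≤ u k)
    (haff : ∀ k ≤ n - 1, u 1 * u k ≤ u 0 * u (k + 1)) :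
    (u 0 + u 1) ^ n ≤ u 0 ^ (n - 1) * (u 0 + ∑ k ∈ Finset.Icc 1 n, (n.choose k : ℝ) * u k) ∧
    (u 0 + ∑ k ∈ Finset.Icc 1 n, (n.choose k : ℝ) * u k = 1 →
      (u 0 + u 1) ^ n ≤ u 0 ^ (n - 1)) := by
  have h0 : 0 ≤ u 0 := hu 0 (by omega)
  have key : ∀ k, 1 ≤ k → k ≤ n → u 1 ^ k ≤ u 0 ^ (k - 1) * u k := by
    intro k
    induction k with
    | zero => intro h; omega
    | succ m ih =>
      intro h1 h2
      rcases eq_or_lt_of_le h1 with h | h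
      · have hm : m = 0 := by omega
        subst hm; simp
      · have hm1 : 1 ≤ m := by omega
        have hm2 : m ≤ n := by omega
        have hih := ih hm1 hm2
        have haffm := haff m (by omega)
        have h1nn : 0 ≤ u 1 := hu 1 (by omega)
        calc u 1 ^ (m + 1) = u 1 * u 1 ^ m := by ring
          _ ≤ u 1 * (u 0 ^ (m - 1) * u m) := mul_le_mul_of_nonneg_left hih h1nn
          _ = u 0 ^ (m - 1) * (u 1 * u m) := by ring
          _ ≤ u 0 ^ (m - 1) * (u 0 * u (m + 1)) :=
              mul_le_mul_of_nonneg_left haffm (pow_nonneg h0 _)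
          _ = u 0 ^ ((m - 1) + 1) * u (m + 1) := by rw [pow_succ]; ring
          _ = u 0 ^ ((m + 1) - 1) * u (m + 1) := by congr 2; omega
  have hmain : (u 0 + u 1) ^ n ≤
      u 0 ^ (n - 1) * (u 0 + ∑ k ∈ Finset.Icc 1 n, (n.choose k : ℝ) * u k) := by
    have hexp : (u 0 + u 1) ^ n
        = ∑ k ∈ Finset.range (n + 1), u 1 ^ k * u 0 ^ (n - k) * (n.choose k : ℝ) := by
      rw [add_comm, add_pow]
    have hset : Finset.range (n + 1) = insert 0 (Finset.Icc 1 n) := by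
      ext x; simp [Finset.mem_range, Finset.mem_Icc]; omega
    have hnot : (0 : ℕ) ∉ Finset.Icc 1 n := by simp
    have hrhs : u 0 ^ (n - 1) * (u 0 + ∑ k ∈ Finset.Icc 1 n, (n.choose k : ℝ) * u k)
        = u 0 ^ n + ∑ k ∈ Finset.Icc 1 n, (n.choose k : ℝ) * (u 0 ^ (n - 1) * u k) := by
      rw [mul_add, Finset.mul_sum]
      congr 1
      · rw [← pow_succ]; congr 1; omega
      · exact Finset.sum_congr rfl fun k _ => by ring
    rw [hexp, hrhs, hset, Finset.sum_insert hnot]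
    have h00 : u 1 ^ 0 * u 0 ^ (n - 0) * (n.choose 0 : ℝ) = u 0 ^ n := by simp
    rw [h00]
    refine add_le_add_right (Finset.sum_le_sum fun k hk => ?_) _
    obtain ⟨hk1, hkn⟩ := Finset.mem_Icc.mp hk
    have hkey := key k hk1 hkn
    calc u 1 ^ k * u 0 ^ (n - k) * (n.choose k : ℝ)
        ≤ (u 0 ^ (k - 1) * u k) * u 0 ^ (n - k) * (n.choose k : ℝ) := by
          apply mul_le_mul_of_nonneg_right _ (by positivity)
          exact mul_le_mul_of_nonneg_right hkey (pow_nonneg h0 _)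
      _ = (n.choose k : ℝ) * (u 0 ^ ((k - 1) + (n - k)) * u k) := by rw [pow_add]; ring
      _ = (n.choose k : ℝ) * (u 0 ^ (n - 1) * u k) := by
          congr 3; omega
  exact ⟨hmain, fun h => by rw [h, mul_one] at hmain; exact hmain⟩

end
end

section
/- Let μ_1^* be the Borel probability measure on [1/e, 1] with CDF Φ(p) = 1 + log p for p ∈ [1/e, 1]. Then for all real numbers a, b with 0 ≤ b ≤ a ≤ 1: a − ∫_{[0,1]} max(b, p)·1{p ≤ a} dμ_1^*(p) ≤ 1/e, with equality if and only if b ≤ 1/e ≤ a. Consequently, for every integer n ≥ 1 and every Borel probability measure G on [0,1]^n (not necessarily a product measure), the regret of the second-price auction with random reserve μ_1^* against G satisfies Regret(μ_1^*, G) ≤ 1/e. -/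
open MeasureTheory Real Set ENNReal

noncomputable section

/-- CDF of the single-buyer optimal reserve distribution `μ₁*`: `0` below `1/e`,
`1 + log p` on `[1/e, 1]`, and `1` above `1`. -/
def cdf1 (v : ℝ) : ℝ :=
  if v < Real.exp (-1) then 0 else if v ≤ 1 then 1 + Real.log v else 1

namespace Stmt15Aux

lemma hc0 : (0:ℝ) < Real.exp (-1) := Real.exp_pos _

lemma hc1 : Real.exp (-1) < 1 := by
  have := Real.exp_lt_exp.2 (show (-1:ℝ) < 0 by norm_num)
  simpa [Real.exp_zero] using this

lemma integrableOn_inv {s t : ℝ} (hs : 0 < s) (hst : s ≤ t) :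
    IntegrableOn (fun p : ℝ => p⁻¹) (Ioc s t) volume := by
  rw [← intervalIntegrable_iff_integrableOn_Ioc_of_le hst]
  refine intervalIntegral.intervalIntegrable_inv (f := fun x => x) ?_ continuousOn_id
  intro x hx
  rw [uIcc_of_le hst] at hx
  exact ne_of_gt (lt_of_lt_of_le hs hx.1)

lemma integral_inv_Ioc {s t : ℝ} (hs : 0 < s) (hst : s ≤ t) :
    ∫ p in Ioc s t, p⁻¹ = Real.log t - Real.log s := by
  rw [← intervalIntegral.integral_of_le hst, integral_inv_of_pos hs (hs.trans_le hst),
    Real.log_div (ne_of_gt (hs.trans_le hst)) (ne_of_gt hs)]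

lemma lintegral_inv_Ioc {s t : ℝ} (hs : 0 < s) (hst : s ≤ t) :
    ∫⁻ p in Ioc s t, ENNReal.ofReal p⁻¹ ∂volume = ENNReal.ofReal (Real.log t - Real.log s) := by
  rw [← ofReal_integral_eq_lintegral_ofReal (integrableOn_inv hs hst) ?_, integral_inv_Ioc hs hst]
  filter_upwards [ae_restrict_mem measurableSet_Ioc] with p hp
  exact inv_nonneg.2 (le_of_lt (hs.trans hp.1))

def rho : Measure ℝ :=
  (volume.restrict (Ioc (Real.exp (-1)) 1)).withDensity fun p => ENNReal.ofReal p⁻¹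

lemma rho_Iic (v : ℝ) : rho (Iic v) = ENNReal.ofReal (cdf1 v) := by
  rw [rho, withDensity_apply _ measurableSet_Iic, Measure.restrict_restrict measurableSet_Iic]
  rcases lt_or_ge v (Real.exp (-1)) with h | h
  · have he : Iic v ∩ Ioc (Real.exp (-1)) 1 = ∅ := by
      ext p
      simp only [mem_inter_iff, mem_Iic, mem_Ioc, mem_empty_iff_false, iff_false, not_and]
      intro h1 h2 h3
      linarith
    rw [he]
    simp [cdf1, if_pos h]
  · rcases le_or_gt v 1 with h1 | h1
    · have he : Iic v ∩ Ioc (Real.exp (-1)) 1 = Ioc (Real.exp (-1)) v := by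
        ext p
        simp only [mem_inter_iff, mem_Iic, mem_Ioc]
        constructor
        · rintro ⟨hp, hp2, _⟩; exact ⟨hp2, hp⟩
        · rintro ⟨hp2, hp⟩; exact ⟨hp, hp2, hp.trans h1⟩
      rw [he, lintegral_inv_Ioc hc0 h, cdf1, if_neg (not_lt.2 h), if_pos h1, Real.log_exp]
      congr 1
      ring
    · have he : Iic v ∩ Ioc (Real.exp (-1)) 1 = Ioc (Real.exp (-1)) 1 := by
        apply inter_eq_self_of_subset_right
        intro p hp
        exact hp.2.trans h1.le
      rw [he, lintegral_inv_Ioc hc0 hc1.le, Real.log_exp, Real.log_one, cdf1,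
        if_neg (not_lt.2 h), if_neg (not_le.2 h1)]
      norm_num

lemma mu_eq (μ : Measure ℝ) [IsProbabilityMeasure μ]
    (hμ : ∀ v, μ (Iic v) = ENNReal.ofReal (cdf1 v)) : μ = rho :=
  Measure.ext_of_Iic μ rho fun v => by rw [hμ v, rho_Iic]

lemma rho_restrict : rho.restrict (Icc 0 1) = rho := by
  rw [rho, restrict_withDensity measurableSet_Icc, Measure.restrict_restrict measurableSet_Icc,
    inter_eq_self_of_subset_right]
  intro p hp
  exact ⟨(hc0.trans hp.1).le, hp.2⟩

lemma integral_rho (g : ℝ → ℝ) :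
    ∫ p, g p ∂rho = ∫ p in Ioc (Real.exp (-1)) 1, p⁻¹ * g p := by
  have hd : (fun p : ℝ => ENNReal.ofReal p⁻¹)
      = fun p => ((Real.toNNReal p⁻¹ : NNReal) : ℝ≥0∞) := rfl
  rw [rho, hd, integral_withDensity_eq_integral_smul (measurable_inv.real_toNNReal) g]
  refine setIntegral_congr_fun measurableSet_Ioc fun p hp => ?_
  have hp0 : (0:ℝ) < p := hc0.trans hp.1
  simp [NNReal.smul_def, Real.coe_toNNReal _ (inv_nonneg.2 hp0.le)]

end Stmt15Aux

namespace Stmt15Aux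

lemma setIntegral_mu (μ : Measure ℝ) [IsProbabilityMeasure μ]
    (hμ : ∀ v, μ (Iic v) = ENNReal.ofReal (cdf1 v)) (g : ℝ → ℝ) :
    ∫ p in Icc (0:ℝ) 1, g p ∂μ = ∫ p in Ioc (Real.exp (-1)) 1, p⁻¹ * g p := by
  have : ∫ p in Icc (0:ℝ) 1, g p ∂μ = ∫ p, g p ∂rho := by
    rw [mu_eq μ hμ]
    show ∫ p, g p ∂(rho.restrict (Icc 0 1)) = _
    rw [rho_restrict]
  rw [this, integral_rho]

lemma eval_low {a b : ℝ} (ha : a < Real.exp (-1)) :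
    ∫ p in Ioc (Real.exp (-1)) 1, p⁻¹ * (if p ≤ a then max b p else 0) = 0 := by
  rw [setIntegral_congr_fun measurableSet_Ioc (g := fun _ => (0:ℝ)), integral_zero]
  intro p hp
  dsimp only
  rw [if_neg (not_le.2 (ha.trans hp.1)), mul_zero]

lemma eval_midb {a b : ℝ} (hb : b ≤ Real.exp (-1)) (hca : Real.exp (-1) ≤ a) (ha1 : a ≤ 1) :
    ∫ p in Ioc (Real.exp (-1)) 1, p⁻¹ * (if p ≤ a then max b p else 0)
      = a - Real.exp (-1) := by
  rw [setIntegral_congr_fun measurableSet_Ioc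
      (g := fun p => (Iic a).indicator (fun _ => (1:ℝ)) p)]
  · rw [setIntegral_indicator measurableSet_Iic]
    have he : Ioc (Real.exp (-1)) 1 ∩ Iic a = Ioc (Real.exp (-1)) a := by
      ext p
      simp only [mem_inter_iff, mem_Ioc, mem_Iic]
      constructor
      · rintro ⟨⟨h1, h2⟩, h3⟩; exact ⟨h1, h3⟩
      · rintro ⟨h1, h3⟩; exact ⟨⟨h1, h3.trans ha1⟩, h3⟩
    rw [he, setIntegral_const, measureReal_def, Real.volume_Ioc, smul_eq_mul, mul_one,
      ENNReal.toReal_ofReal (by linarith)]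
  · intro p hp
    dsimp only
    have hp0 : (0:ℝ) < p := hc0.trans hp.1
    by_cases hpa : p ≤ a
    · rw [if_pos hpa, max_eq_right (hb.trans hp.1.le), indicator_of_mem (mem_Iic.2 hpa),
        inv_mul_cancel₀ (ne_of_gt hp0)]
    · rw [if_neg hpa, indicator_of_notMem (by simpa [mem_Iic] using hpa), mul_zero]

lemma eval_highb {a b : ℝ} (hcb : Real.exp (-1) < b) (hba : b ≤ a) (ha1 : a ≤ 1) :
    ∫ p in Ioc (Real.exp (-1)) 1, p⁻¹ * (if p ≤ a then max b p else 0)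
      = b * Real.log b + a := by
  have hb1 : b ≤ 1 := hba.trans ha1
  rw [setIntegral_congr_fun measurableSet_Ioc
      (g := fun p => (Ioc (Real.exp (-1)) b).indicator (fun p => b * p⁻¹) p
            + (Ioc b a).indicator (fun _ => (1:ℝ)) p)]
  · have I1 : Integrable ((Ioc (Real.exp (-1)) b).indicator (fun p => b * p⁻¹))
        (volume.restrict (Ioc (Real.exp (-1)) 1)) := by
      apply Integrable.restrict
      exact IntegrableOn.integrable_indicator ((integrableOn_inv hc0 hcb.le).const_mul b) measurableSet_Ioc
    have I2 : Integrable ((Ioc b a).indicator (fun _ => (1:ℝ)))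
        (volume.restrict (Ioc (Real.exp (-1)) 1)) := by
      apply Integrable.restrict
      refine IntegrableOn.integrable_indicator (integrableOn_const ?_) measurableSet_Ioc
      rw [Real.volume_Ioc]; exact ofReal_ne_top
    rw [integral_add I1 I2, setIntegral_indicator measurableSet_Ioc,
      setIntegral_indicator measurableSet_Ioc]
    have he1 : Ioc (Real.exp (-1)) 1 ∩ Ioc (Real.exp (-1)) b = Ioc (Real.exp (-1)) b := by
      apply inter_eq_self_of_subset_right
      exact Ioc_subset_Ioc le_rfl hb1
    have he2 : Ioc (Real.exp (-1)) 1 ∩ Ioc b a = Ioc b a := by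
      apply inter_eq_self_of_subset_right
      exact Ioc_subset_Ioc hcb.le ha1
    rw [he1, he2, MeasureTheory.integral_const_mul, integral_inv_Ioc hc0 hcb.le, Real.log_exp,
      setIntegral_const, measureReal_def, Real.volume_Ioc, smul_eq_mul, mul_one,
      ENNReal.toReal_ofReal (by linarith)]
    ring
  · intro p hp
    dsimp only
    have hp0 : (0:ℝ) < p := hc0.trans hp.1
    rcases le_or_gt p b with hpb | hpb
    · have hpa : p ≤ a := hpb.trans hba
      rw [if_pos hpa, max_eq_left hpb,
        indicator_of_mem (show p ∈ Ioc (Real.exp (-1)) b from ⟨hp.1, hpb⟩),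
        indicator_of_notMem (show p ∉ Ioc b a by simp [mem_Ioc]; intro h; linarith)]
      ring
    · by_cases hpa : p ≤ a
      · rw [if_pos hpa, max_eq_right hpb.le,
          indicator_of_notMem (show p ∉ Ioc (Real.exp (-1)) b by simp [mem_Ioc]; intro h; linarith),
          indicator_of_mem (show p ∈ Ioc b a from ⟨hpb, hpa⟩),
          inv_mul_cancel₀ (ne_of_gt hp0)]
        ring
      · rw [if_neg hpa, mul_zero,
          indicator_of_notMem (show p ∉ Ioc (Real.exp (-1)) b by simp [mem_Ioc]; intro h; linarith),
          indicator_of_notMem (show p ∉ Ioc b a by simp [mem_Ioc]; intro h; linarith)]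
        ring

lemma neg_mul_log_lt {b : ℝ} (hb : Real.exp (-1) < b) : -(b * Real.log b) < Real.exp (-1) := by
  have hbpos : (0:ℝ) < b := hc0.trans hb
  set t : ℝ := Real.log b + 1 with ht
  have hlog : Real.log b = t - 1 := by rw [ht]; ring
  have htpos : 0 < t := by
    have h := Real.log_lt_log hc0 hb
    rw [Real.log_exp] at h
    linarith
  have hbe : b = Real.exp (t - 1) := by rw [← hlog, Real.exp_log hbpos]
  have key : Real.exp t * (1 - t) < 1 := by
    have h1 : (-t) + 1 < Real.exp (-t) := Real.add_one_lt_exp (by linarith)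
    have h2 := mul_lt_mul_of_pos_left h1 (Real.exp_pos t)
    rw [← Real.exp_add, add_neg_cancel, Real.exp_zero] at h2
    calc Real.exp t * (1 - t) = Real.exp t * (-t + 1) := by ring
      _ < 1 := h2
  calc -(b * Real.log b) = Real.exp (t - 1) * (1 - t) := by rw [hlog, ← hbe]; ring
    _ = Real.exp (-1) * (Real.exp t * (1 - t)) := by
        rw [show t - 1 = t + (-1) by ring, Real.exp_add]; ring
    _ < Real.exp (-1) * 1 := by
        exact mul_lt_mul_of_pos_left key hc0
    _ = Real.exp (-1) := mul_one _

lemma pointwise (μ : Measure ℝ) [IsProbabilityMeasure μ]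
    (hμ : ∀ v, μ (Iic v) = ENNReal.ofReal (cdf1 v)) (a b : ℝ)
    (hb0 : 0 ≤ b) (hba : b ≤ a) (ha1 : a ≤ 1) :
    (a - ∫ p in Icc (0:ℝ) 1, (if p ≤ a then max b p else 0) ∂μ ≤ Real.exp (-1)) ∧
    ((a - ∫ p in Icc (0:ℝ) 1, (if p ≤ a then max b p else 0) ∂μ) = Real.exp (-1)
      ↔ b ≤ Real.exp (-1) ∧ Real.exp (-1) ≤ a) := by
  rw [setIntegral_mu μ hμ]
  rcases lt_or_ge a (Real.exp (-1)) with hca | hca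
  · rw [eval_low hca]
    constructor
    · linarith
    · constructor
      · intro h; linarith
      · rintro ⟨_, h⟩; linarith
  · rcases le_or_gt b (Real.exp (-1)) with hb | hb
    · rw [eval_midb hb hca ha1]
      constructor
      · linarith
      · constructor
        · intro _; exact ⟨hb, hca⟩
        · intro _; ring
    · rw [eval_highb hb hba ha1]
      have := neg_mul_log_lt hb
      constructor
      · linarith
      · constructor
        · intro h; exfalso; linarith
        · rintro ⟨h, _⟩; linarith

end Stmt15Aux


namespace Stmt15Aux

lemma top_bounds {n : ℕ} (hn : 1 ≤ n) {v : Fin n → ℝ}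
    (hv : v ∈ Icc (0 : Fin n → ℝ) 1) :
    0 ≤ top2 v ∧ top2 v ≤ top1 v ∧ top1 v ≤ 1 := by
  haveI hne : Nonempty (Fin n) := Fin.pos_iff_nonempty.1 hn
  have i0 : Fin n := ⟨0, hn⟩
  have hv0 : ∀ i, 0 ≤ v i := fun i => hv.1 i
  have hv1 : ∀ i, v i ≤ 1 := fun i => hv.2 i
  have htop1_le : top1 v ≤ 1 := ciSup_le hv1
  have hle_top1 : ∀ i, v i ≤ top1 v := fun i => le_ciSup (Set.Finite.bddAbove (Set.finite_range v)) i
  have htop1_0 : 0 ≤ top1 v := (hv0 i0).trans (hle_top1 i0)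
  set S : Fin n → ℝ := fun i => ⨆ j ∈ ({i}ᶜ : Set (Fin n)), v j with hS
  have hg : ∀ i j, (⨆ _ : j ∈ ({i}ᶜ : Set (Fin n)), v j)
      = if j = i then 0 else v j := by
    intro i j
    by_cases h : j = i
    · rw [if_pos h]
      haveI : IsEmpty (j ∈ ({i}ᶜ : Set (Fin n))) := by
        simp [h]
      exact Real.iSup_of_isEmpty _
    · rw [if_neg h]
      exact ciSup_pos (by simpa using h)
  have hS0 : ∀ i, 0 ≤ S i := by
    intro i
    rcases eq_or_ne i0 i with h | h
    · rcases Nat.lt_or_ge n 2 with h2 | h2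
      · -- n = 1 : S i = 0
        have : ∀ j, (⨆ _ : j ∈ ({i}ᶜ : Set (Fin n)), v j) = 0 := by
          intro j
          rw [hg]
          have : j = i := by omega
          rw [if_pos this]
        rw [hS]
        dsimp only
        rw [iSup_congr this]
        simp [ciSup_const]
      · -- n ≥ 2 : pick j ≠ i
        obtain ⟨j, hj⟩ : ∃ j : Fin n, j ≠ i := by
          refine ⟨if i = ⟨0, by omega⟩ then ⟨1, by omega⟩ else ⟨0, by omega⟩, ?_⟩
          split <;> simp_all [Fin.ext_iff] <;> omega
        have hb : BddAbove (Set.range fun j => ⨆ _ : j ∈ ({i}ᶜ : Set (Fin n)), v j) := by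
          apply Set.Finite.bddAbove (Set.finite_range _)
        calc (0:ℝ) ≤ v j := hv0 j
          _ = ⨆ _ : j ∈ ({i}ᶜ : Set (Fin n)), v j := by rw [hg, if_neg hj]
          _ ≤ S i := le_ciSup hb j
    · have hb : BddAbove (Set.range fun j => ⨆ _ : j ∈ ({i}ᶜ : Set (Fin n)), v j) := by
        apply Set.Finite.bddAbove (Set.finite_range _)
      calc (0:ℝ) ≤ v i0 := hv0 i0
        _ = ⨆ _ : i0 ∈ ({i}ᶜ : Set (Fin n)), v i0 := by rw [hg, if_neg h]
        _ ≤ S i := le_ciSup hb i0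
  have hS_le : ∀ i, S i ≤ top1 v := by
    intro i
    apply ciSup_le
    intro j
    rw [hg]
    split
    · exact htop1_0
    · exact hle_top1 j
  refine ⟨le_ciInf hS0, ?_, htop1_le⟩
  calc top2 v ≤ S i0 := ciInf_le (Set.Finite.bddBelow (Set.finite_range S)) i0
    _ ≤ top1 v := hS_le i0

end Stmt15Aux


/-- the pointwise regret of a SPA with random reserve `μ₁*` when the
highest value is `a` and second-highest is `b` (`0 ≤ b ≤ a ≤ 1`) is at most `1/e`, with
equality iff `b ≤ 1/e ≤ a`; consequently `Regret(μ₁*, G) ≤ 1/e` for every Borel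
probability measure `G` on `[0,1]^n`. -/
theorem stmt15 (μ : Measure ℝ) [IsProbabilityMeasure μ]
    (hμ : ∀ v : ℝ, μ (Set.Iic v) = ENNReal.ofReal (cdf1 v)) :
    (∀ a b : ℝ, 0 ≤ b → b ≤ a → a ≤ 1 →
      (a - ∫ p in Set.Icc (0:ℝ) 1, (if p ≤ a then max b p else 0) ∂μ ≤ Real.exp (-1)) ∧
      ((a - ∫ p in Set.Icc (0:ℝ) 1, (if p ≤ a then max b p else 0) ∂μ) = Real.exp (-1)
        ↔ b ≤ Real.exp (-1) ∧ Real.exp (-1) ≤ a)) ∧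
    (∀ n : ℕ, 1 ≤ n → ∀ G : Measure (Fin n → ℝ), IsProbabilityMeasure G →
      G (Set.Icc 0 1) = 1 → spaRegret n μ G ≤ Real.exp (-1)) := by
  constructor
  · intro a b hb0 hba ha1
    exact Stmt15Aux.pointwise μ hμ a b hb0 hba ha1
  · intro n hn G hG hG1
    rw [spaRegret]
    set h : (Fin n → ℝ) → ℝ := fun v =>
      top1 v - ∫ p in Set.Icc (0:ℝ) 1, (if p ≤ top1 v then max (top2 v) p else 0) ∂μ with hh
    by_cases hint : Integrable h (G.restrict (Set.Icc 0 1))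
    · have hb : ∀ᵐ v ∂(G.restrict (Set.Icc 0 1)), h v ≤ Real.exp (-1) := by
        filter_upwards [ae_restrict_mem measurableSet_Icc] with v hv
        obtain ⟨h1, h2, h3⟩ := Stmt15Aux.top_bounds hn hv
        exact (Stmt15Aux.pointwise μ hμ _ _ h1 h2 h3).1
      calc ∫ v in Set.Icc (0 : Fin n → ℝ) 1, h v ∂G
          ≤ ∫ _ in Set.Icc (0 : Fin n → ℝ) 1, Real.exp (-1) ∂G :=
            integral_mono_ae hint (integrable_const _) hb
        _ = Real.exp (-1) := by
            rw [setIntegral_const, measureReal_def, hG1]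
            simp
    · rw [integral_undef hint]
      positivity


end
end
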